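/- arXiv:0711.2188 — 7 statements merged into one kernel-verified Lean document; each statement's English description precedes it below -/
import Mathlib

section
/- Let 0 < φ < ψ < ∞, β > 1/2, c₁ > 0 and c₂ > 0 be constants. For each n ∈ ℕ set ℓ¹ₙ = ⌊c₁ nᵝ⌋ and ℓ²ₙ = ⌊c₂ nᵝ⌋, and let φⁿᵢ (1 ≤ i ≤ ℓ¹ₙ) and ψⁿᵢ (1 ≤ i ≤ ℓ²ₙ) be positive reals with sup_{n,i} φⁿᵢ ≤ φ < ψ ≤ inf_{n,i} ψⁿᵢ. For each n let Φⁿ₁,…,Φⁿ_{ℓ¹ₙ} be mutually independent random variables with Φⁿᵢ exponentially distributed with rate φⁿᵢ, and let Ψⁿ₁,…,Ψⁿ_{ℓ²ₙ} be mutually independent random variables with Ψⁿᵢ exponentially distributed with rate ψⁿᵢ. Then there exist constants γ > 0 and κ > 0 such that, with θₙ = γ log n, both P(#{i ≤ ℓ¹ₙ : Φⁿᵢ ≥ θₙ} ≤ n^{1/2+κ}) → 0 and P(#{i ≤ ℓ²ₙ : Ψⁿᵢ ≥ θₙ} ≥ n^{1/2−κ}) → 0 as n → ∞. -/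
open MeasureTheory ProbabilityTheory Filter

/-- A real random variable `X` is exponentially distributed with rate `rate > 0` if
`P(X > t) = exp(-rate * t)` for every `t ≥ 0`. -/
def IsExpRV {Ω : Type*} [MeasurableSpace Ω] (P : Measure Ω) (rate : ℝ) (X : Ω → ℝ) : Prop :=
  Measurable X ∧ ∀ t : ℝ, 0 ≤ t → P {ω | t < X ω} = ENNReal.ofReal (Real.exp (-rate * t))

private lemma tendsto_ofReal_rpow_neg (C κ : ℝ) (hκ : 0 < κ) :
    Tendsto (fun n : ℕ => ENNReal.ofReal (C * (n:ℝ) ^ (-κ))) atTop (nhds 0) := by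
  have h : Tendsto (fun n : ℕ => C * (n:ℝ) ^ (-κ)) atTop (nhds 0) := by
    have := (tendsto_rpow_neg_atTop hκ).comp (tendsto_natCast_atTop_atTop (R := ℝ))
    simpa using this.const_mul C
  simpa using (ENNReal.tendsto_ofReal h)

private lemma tendsto_zero_of_le (f : ℕ → ENNReal) (C κ : ℝ) (hκ : 0 < κ)
    (h : ∀ᶠ n in atTop, f n ≤ ENNReal.ofReal (C * (n:ℝ) ^ (-κ))) :
    Tendsto f atTop (nhds 0) :=
  tendsto_of_tendsto_of_tendsto_of_le_of_le' tendsto_const_nhds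
    (tendsto_ofReal_rpow_neg C κ hκ) (Eventually.of_forall fun _ => zero_le) h

private lemma phi_side {Ω : Type*} [MeasurableSpace Ω] (P : Measure Ω) [IsProbabilityMeasure P]
    (φ c₁ γ κ β : ℝ) (hφpos : 0 < φ) (hγpos : 0 < γ) (hκpos : 0 < κ) (hc₁ : 0 < c₁)
    (hEφ : β - γ*φ = 1/2 + 2*κ)
    (φr : (n : ℕ) → Fin ⌊c₁ * (n : ℝ) ^ β⌋₊ → ℝ)
    (hφr : ∀ n i, 0 < φr n i ∧ φr n i ≤ φ)
    (Φ : (n : ℕ) → Fin ⌊c₁ * (n : ℝ) ^ β⌋₊ → Ω → ℝ)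
    (hΦexp : ∀ n i, IsExpRV P (φr n i) (Φ n i))
    (hΦind : ∀ n, iIndepFun (Φ n) P) :
    ∀ᶠ n : ℕ in atTop,
      P {ω | (Nat.card {i // γ * Real.log n ≤ Φ n i ω} : ℝ) ≤ (n : ℝ) ^ ((1:ℝ)/2 + κ)}
        ≤ ENNReal.ofReal ((8/c₁) * (n:ℝ) ^ (-κ)) := by
  classical
  have hlogtend : Tendsto (fun n : ℕ => Real.log n) atTop atTop :=
    Real.tendsto_log_atTop.comp tendsto_natCast_atTop_atTop
  have hβtend : Tendsto (fun n : ℕ => c₁ * (n:ℝ) ^ β) atTop atTop := by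
    have hβpos : 0 < β := by linarith [hκpos, mul_pos hγpos hφpos]
    exact ((tendsto_rpow_atTop hβpos).comp tendsto_natCast_atTop_atTop).const_mul_atTop hc₁
  have hκtend : Tendsto (fun n : ℕ => (n:ℝ) ^ κ) atTop atTop :=
    (tendsto_rpow_atTop hκpos).comp tendsto_natCast_atTop_atTop
  filter_upwards [eventually_ge_atTop 1, hlogtend.eventually_ge_atTop 0,
    hβtend.eventually_ge_atTop 2, hκtend.eventually_ge_atTop (4/c₁)] with n hn1 hlog0 hβ2 hκ4
  have hnpos : (0:ℝ) < n := by exact_mod_cast hn1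
  have hn1' : (1:ℝ) ≤ n := by exact_mod_cast hn1
  set θ := γ * Real.log n with hθdef
  have hθ0 : 0 ≤ θ := mul_nonneg hγpos.le hlog0
  set ℓ := ⌊c₁ * (n : ℝ) ^ β⌋₊ with hℓdef
  set A : Fin ℓ → Set Ω := fun i => Φ n i ⁻¹' Set.Ici θ with hAdef
  have hA : ∀ i, MeasurableSet (A i) := fun i => (hΦexp n i).1 measurableSet_Ici
  set X : Fin ℓ → Ω → ℝ := fun i => (A i).indicator (fun _ => (1:ℝ)) with hXdef
  have hXmem : ∀ i, MemLp (X i) 2 P := fun i =>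
    memLp_indicator_const 2 (hA i) 1 (Or.inr (measure_ne_top P _))
  have hXint : ∀ i, P[X i] = (P (A i)).toReal := fun i => by
    rw [hXdef]
    rw [integral_indicator_const (1:ℝ) (hA i), smul_eq_mul, mul_one, measureReal_def]
  set S : Ω → ℝ := ∑ i, X i with hSdef
  have hSmem : MemLp S 2 P := memLp_finset_sum' _ fun i _ => hXmem i
  have hmean : P[S] = ∑ i, (P (A i)).toReal := by
    rw [hSdef]
    simp only [Finset.sum_apply]
    rw [integral_finset_sum _ fun i _ => (hXmem i).integrable (by norm_num)]
    exact Finset.sum_congr rfl fun i _ => hXint i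
  -- independence of the indicators
  have hgmeas : Measurable ((Set.Ici θ).indicator (fun _ => (1:ℝ))) :=
    measurable_const.indicator measurableSet_Ici
  have hXcomp : ∀ i, X i = (Set.Ici θ).indicator (fun _ => (1:ℝ)) ∘ Φ n i := by
    intro i; ext ω
    simp [hXdef, hAdef, Set.indicator_apply]
  have hindep : Set.Pairwise ↑(Finset.univ : Finset (Fin ℓ))
      fun i j => IndepFun (X i) (X j) P := by
    intro i _ j _ hij
    rw [hXcomp i, hXcomp j]
    exact ((hΦind n).indepFun hij).comp hgmeas hgmeas
  -- variance bound
  have hXsq : ∀ i, (X i) ^ 2 = X i := by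
    intro i; ext ω
    simp only [Pi.pow_apply, hXdef, Set.indicator_apply]
    split_ifs <;> norm_num
  have hvar : variance S P ≤ P[S] := by
    rw [hSdef, IndepFun.variance_sum (fun i _ => hXmem i) hindep, hmean]
    refine Finset.sum_le_sum fun i _ => ?_
    calc variance (X i) P ≤ P[(X i) ^ 2] := variance_le_expectation_sq (hXmem i).1
      _ = P[X i] := by rw [hXsq i]
      _ = (P (A i)).toReal := hXint i
  -- lower bound on the mean
  have hq : ∀ i, (n:ℝ) ^ (-(γ*φ)) ≤ (P (A i)).toReal := by
    intro i
    have h1 : {ω | θ < Φ n i ω} ⊆ A i := by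
      intro ω h; simp only [Set.mem_setOf_eq] at h
      simp [hAdef, Set.mem_preimage, Set.mem_Ici, h.le]
    have h2 : ENNReal.ofReal ((n:ℝ) ^ (-(γ*φ))) ≤ P (A i) := by
      calc ENNReal.ofReal ((n:ℝ) ^ (-(γ*φ)))
          ≤ ENNReal.ofReal (Real.exp (-(φr n i) * θ)) := by
            apply ENNReal.ofReal_le_ofReal
            rw [Real.rpow_def_of_pos hnpos]
            apply Real.exp_le_exp.mpr
            have h3 := mul_le_mul_of_nonneg_right (hφr n i).2 hθ0
            have h4 : Real.log n * (-(γ*φ)) = -φ * θ := by rw [hθdef]; ring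
            linarith
        _ = P {ω | θ < Φ n i ω} := ((hΦexp n i).2 θ hθ0).symm
        _ ≤ P (A i) := measure_mono h1
    exact (ENNReal.ofReal_le_iff_le_toReal (measure_ne_top P _)).mp h2
  have hℓge : (c₁/2) * (n:ℝ)^β ≤ (ℓ:ℝ) := by
    have := Nat.sub_one_lt_floor (c₁ * (n:ℝ)^β)
    rw [← hℓdef] at this
    linarith
  have hμS_ge : (c₁/2) * (n:ℝ)^((1:ℝ)/2 + 2*κ) ≤ P[S] := by
    rw [hmean]
    calc (c₁/2) * (n:ℝ)^((1:ℝ)/2 + 2*κ)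
        = (c₁/2) * (n:ℝ)^β * (n:ℝ)^(-(γ*φ)) := by
          rw [mul_assoc, ← Real.rpow_add hnpos]
          congr 2; linarith
      _ ≤ (ℓ:ℝ) * (n:ℝ)^(-(γ*φ)) := by
          have := (Real.rpow_pos_of_pos hnpos (-(γ*φ))).le
          gcongr
      _ = ∑ _i : Fin ℓ, (n:ℝ)^(-(γ*φ)) := by
          rw [Finset.sum_const, Finset.card_univ, Fintype.card_fin, nsmul_eq_mul]
      _ ≤ ∑ i, (P (A i)).toReal := Finset.sum_le_sum fun i _ => hq i
  have hμpos : 0 < P[S] := lt_of_lt_of_le (by positivity) hμS_ge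
  have hr_le : (n:ℝ)^((1:ℝ)/2 + κ) ≤ P[S]/2 := by
    have h1 : (n:ℝ)^((1:ℝ)/2+κ) * (4/c₁) ≤ (n:ℝ)^((1:ℝ)/2+κ) * (n:ℝ)^κ := by
      have := (Real.rpow_pos_of_pos hnpos ((1:ℝ)/2+κ)).le
      gcongr
    rw [← Real.rpow_add hnpos] at h1
    have h2 : (1:ℝ)/2 + κ + κ = 1/2 + 2*κ := by ring
    rw [h2] at h1
    have h3 : (n:ℝ)^((1:ℝ)/2+κ) = (c₁/4) * ((n:ℝ)^((1:ℝ)/2+κ) * (4/c₁)) := by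
      field_simp
    calc (n:ℝ)^((1:ℝ)/2+κ) = (c₁/4) * ((n:ℝ)^((1:ℝ)/2+κ) * (4/c₁)) := h3
      _ ≤ (c₁/4) * (n:ℝ)^((1:ℝ)/2 + 2*κ) := by gcongr
      _ = ((c₁/2) * (n:ℝ)^((1:ℝ)/2 + 2*κ))/2 := by ring
      _ ≤ P[S]/2 := by linarith
  have hsub : {ω | (Nat.card {i // θ ≤ Φ n i ω} : ℝ) ≤ (n:ℝ)^((1:ℝ)/2+κ)}
      ⊆ {ω | P[S]/2 ≤ |S ω - P[S]|} := by
    intro ω hω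
    simp only [Set.mem_setOf_eq] at hω ⊢
    have hcard : S ω = (Nat.card {i // θ ≤ Φ n i ω} : ℝ) := by
      have : S ω = ∑ i, X i ω := by rw [hSdef]; simp
      rw [this]
      have heach : ∀ i, X i ω = if θ ≤ Φ n i ω then (1:ℝ) else 0 := by
        intro i; simp [hXdef, hAdef, Set.indicator_apply]
      simp only [heach]
      rw [Finset.sum_boole, Nat.card_eq_fintype_card, Fintype.card_subtype]
    have hSle : S ω ≤ P[S]/2 := by rw [hcard]; linarith
    have : P[S] - S ω ≤ |S ω - P[S]| := by
      rw [abs_sub_comm]; exact le_abs_self _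
    linarith
  calc P {ω | (Nat.card {i // θ ≤ Φ n i ω} : ℝ) ≤ (n:ℝ)^((1:ℝ)/2+κ)}
      ≤ P {ω | P[S]/2 ≤ |S ω - P[S]|} := measure_mono hsub
    _ ≤ ENNReal.ofReal (variance S P / (P[S]/2)^2) :=
        meas_ge_le_variance_div_sq hSmem (half_pos hμpos)
    _ ≤ ENNReal.ofReal ((8/c₁) * (n:ℝ) ^ (-κ)) := by
        apply ENNReal.ofReal_le_ofReal
        have h1 : variance S P / (P[S]/2)^2 ≤ P[S] / (P[S]/2)^2 := by
          gcongr
        have h2 : P[S] / (P[S]/2)^2 = 4 / P[S] := by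
          field_simp; ring
        have h3 : 4 / P[S] ≤ 4 / ((c₁/2) * (n:ℝ)^((1:ℝ)/2 + 2*κ)) := by
          have : (0:ℝ) < (c₁/2) * (n:ℝ)^((1:ℝ)/2 + 2*κ) := by positivity
          gcongr
        have h4 : 4 / ((c₁/2) * (n:ℝ)^((1:ℝ)/2 + 2*κ))
            = (8/c₁) * (n:ℝ)^(-((1:ℝ)/2 + 2*κ)) := by
          rw [Real.rpow_neg hnpos.le]
          field_simp
          norm_num
        have h5 : (n:ℝ)^(-((1:ℝ)/2 + 2*κ)) ≤ (n:ℝ)^(-κ) :=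
          Real.rpow_le_rpow_of_exponent_le hn1' (by linarith)
        have h6 : (8/c₁) * (n:ℝ)^(-((1:ℝ)/2 + 2*κ)) ≤ (8/c₁) * (n:ℝ)^(-κ) := by gcongr
        linarith

private lemma psi_side {Ω : Type*} [MeasurableSpace Ω] (P : Measure Ω) [IsProbabilityMeasure P]
    (ψ c₂ γ κ β : ℝ) (hψpos : 0 < ψ) (hγpos : 0 < γ) (hκpos : 0 < κ) (hc₂ : 0 < c₂)
    (hEψ : β - γ*ψ = 1/2 - 2*κ)
    (ψr : (n : ℕ) → Fin ⌊c₂ * (n : ℝ) ^ β⌋₊ → ℝ)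
    (hψr : ∀ n i, ψ ≤ ψr n i)
    (Ψ : (n : ℕ) → Fin ⌊c₂ * (n : ℝ) ^ β⌋₊ → Ω → ℝ)
    (hΨexp : ∀ n i, IsExpRV P (ψr n i) (Ψ n i)) :
    ∀ᶠ n : ℕ in atTop,
      P {ω | (n : ℝ) ^ ((1:ℝ)/2 - κ) ≤ (Nat.card {i // γ * Real.log n ≤ Ψ n i ω} : ℝ)}
        ≤ ENNReal.ofReal ((c₂ * Real.exp ψ) * (n:ℝ) ^ (-κ)) := by
  classical
  have hlogtend : Tendsto (fun n : ℕ => Real.log n) atTop atTop :=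
    Real.tendsto_log_atTop.comp tendsto_natCast_atTop_atTop
  filter_upwards [eventually_ge_atTop 1, hlogtend.eventually_ge_atTop (1/γ)] with n hn1 hlogγ
  have hnpos : (0:ℝ) < n := by exact_mod_cast hn1
  set θ := γ * Real.log n with hθdef
  have hθ1 : 1 ≤ θ := by
    rw [hθdef]
    calc (1:ℝ) = γ * (1/γ) := by field_simp
    _ ≤ γ * Real.log n := by gcongr
  set S : Ω → ENNReal := fun ω => ∑ i, if θ ≤ Ψ n i ω then (1:ENNReal) else 0 with hS
  have hAmeas : ∀ i, MeasurableSet {ω | θ ≤ Ψ n i ω} := fun i =>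
    (hΨexp n i).1 measurableSet_Ici
  have hSmeas : Measurable S := Finset.measurable_sum _ fun i _ =>
    Measurable.ite (hAmeas i) measurable_const measurable_const
  have hrpos : (0:ℝ) < (n:ℝ) ^ ((1:ℝ)/2 - κ) := Real.rpow_pos_of_pos hnpos _
  have hsub : {ω | (n : ℝ) ^ ((1:ℝ)/2 - κ) ≤ (Nat.card {i // θ ≤ Ψ n i ω} : ℝ)}
      ⊆ {ω | ENNReal.ofReal ((n:ℝ) ^ ((1:ℝ)/2 - κ)) ≤ S ω} := by
    intro ω hω
    have hcard : S ω = (Nat.card {i // θ ≤ Ψ n i ω} : ENNReal) := by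
      show (∑ i, if θ ≤ Ψ n i ω then (1:ENNReal) else 0) = _
      rw [Finset.sum_boole, Nat.card_eq_fintype_card, Fintype.card_subtype]
    simp only [Set.mem_setOf_eq] at hω ⊢
    calc ENNReal.ofReal ((n:ℝ) ^ ((1:ℝ)/2 - κ))
        ≤ ENNReal.ofReal ((Nat.card {i // θ ≤ Ψ n i ω} : ℝ)) := ENNReal.ofReal_le_ofReal hω
      _ = (Nat.card {i // θ ≤ Ψ n i ω} : ENNReal) := ENNReal.ofReal_natCast _
      _ = S ω := hcard.symm
  have hlin : ∫⁻ ω, S ω ∂P = ∑ i, P {ω | θ ≤ Ψ n i ω} := by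
    rw [hS]
    rw [lintegral_finset_sum _ fun i _ =>
      Measurable.ite (hAmeas i) measurable_const measurable_const]
    refine Finset.sum_congr rfl fun i _ => ?_
    rw [← lintegral_indicator_one (hAmeas i)]
    congr 1
  have htail : ∀ i, P {ω | θ ≤ Ψ n i ω}
      ≤ ENNReal.ofReal (Real.exp ψ * (n:ℝ) ^ (-(γ*ψ))) := by
    intro i
    have h1 : {ω | θ ≤ Ψ n i ω} ⊆ {ω | θ - 1 < Ψ n i ω} := by
      intro ω h
      simp only [Set.mem_setOf_eq] at h ⊢
      linarith
    calc P {ω | θ ≤ Ψ n i ω} ≤ P {ω | θ - 1 < Ψ n i ω} := measure_mono h1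
      _ = ENNReal.ofReal (Real.exp (-(ψr n i) * (θ-1))) := (hΨexp n i).2 _ (by linarith)
      _ ≤ ENNReal.ofReal (Real.exp ψ * (n:ℝ) ^ (-(γ*ψ))) := by
          apply ENNReal.ofReal_le_ofReal
          rw [Real.rpow_def_of_pos hnpos, ← Real.exp_add]
          apply Real.exp_le_exp.mpr
          have h2 : -(ψr n i) * (θ - 1) ≤ -ψ * (θ - 1) := by
            have := mul_le_mul_of_nonneg_right (hψr n i) (by linarith : (0:ℝ) ≤ θ - 1)
            linarith
          have h3 : -ψ * (θ - 1) = ψ + Real.log n * (-(γ*ψ)) := by rw [hθdef]; ring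
          linarith
  have hcount : (⌊c₂ * (n : ℝ) ^ β⌋₊ : ENNReal) ≤ ENNReal.ofReal (c₂ * (n:ℝ)^β) := by
    rw [← ENNReal.ofReal_natCast]
    exact ENNReal.ofReal_le_ofReal (Nat.floor_le (by positivity))
  have hfinal : c₂ * (n:ℝ)^β * (Real.exp ψ * (n:ℝ)^(-(γ*ψ))) / (n:ℝ)^((1:ℝ)/2-κ)
      = (c₂ * Real.exp ψ) * (n:ℝ)^(-κ) := by
    have hrpow : (n:ℝ)^β * (n:ℝ)^(-(γ*ψ)) / (n:ℝ)^((1:ℝ)/2-κ) = (n:ℝ)^(-κ) := by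
      rw [← Real.rpow_add hnpos, ← Real.rpow_sub hnpos]
      congr 1; linarith
    calc c₂ * (n:ℝ)^β * (Real.exp ψ * (n:ℝ)^(-(γ*ψ))) / (n:ℝ)^((1:ℝ)/2-κ)
        = c₂ * Real.exp ψ * ((n:ℝ)^β * (n:ℝ)^(-(γ*ψ)) / (n:ℝ)^((1:ℝ)/2-κ)) := by ring
      _ = (c₂ * Real.exp ψ) * (n:ℝ)^(-κ) := by rw [hrpow]
  calc P {ω | (n : ℝ) ^ ((1:ℝ)/2 - κ) ≤ (Nat.card {i // θ ≤ Ψ n i ω} : ℝ)}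
      ≤ P {ω | ENNReal.ofReal ((n:ℝ) ^ ((1:ℝ)/2 - κ)) ≤ S ω} := measure_mono hsub
    _ ≤ (∫⁻ ω, S ω ∂P) / ENNReal.ofReal ((n:ℝ) ^ ((1:ℝ)/2 - κ)) :=
        meas_ge_le_lintegral_div hSmeas.aemeasurable
          (ENNReal.ofReal_pos.mpr hrpos).ne'
          ENNReal.ofReal_ne_top
    _ ≤ ENNReal.ofReal (c₂ * (n:ℝ)^β * (Real.exp ψ * (n:ℝ)^(-(γ*ψ))))
          / ENNReal.ofReal ((n:ℝ) ^ ((1:ℝ)/2 - κ)) := by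
        gcongr
        rw [hlin]
        calc ∑ i, P {ω | θ ≤ Ψ n i ω}
            ≤ ∑ _i : Fin ⌊c₂ * (n : ℝ) ^ β⌋₊,
                ENNReal.ofReal (Real.exp ψ * (n:ℝ) ^ (-(γ*ψ))) :=
              Finset.sum_le_sum fun i _ => htail i
          _ = (⌊c₂ * (n : ℝ) ^ β⌋₊ : ENNReal)
                * ENNReal.ofReal (Real.exp ψ * (n:ℝ) ^ (-(γ*ψ))) := by
              simp [Finset.sum_const, nsmul_eq_mul]
          _ ≤ ENNReal.ofReal (c₂ * (n:ℝ)^β)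
                * ENNReal.ofReal (Real.exp ψ * (n:ℝ) ^ (-(γ*ψ))) := by gcongr
          _ = ENNReal.ofReal (c₂ * (n:ℝ)^β * (Real.exp ψ * (n:ℝ)^(-(γ*ψ)))) :=
              (ENNReal.ofReal_mul (by positivity)).symm
    _ = ENNReal.ofReal (c₂ * (n:ℝ)^β * (Real.exp ψ * (n:ℝ)^(-(γ*ψ)))
          / (n:ℝ)^((1:ℝ)/2-κ)) := (ENNReal.ofReal_div_of_pos hrpos).symm
    _ = ENNReal.ofReal ((c₂ * Real.exp ψ) * (n:ℝ) ^ (-κ)) := by rw [hfinal]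


theorem stmt_0
    {Ω : Type*} [MeasurableSpace Ω] (P : Measure Ω) [IsProbabilityMeasure P]
    (φ ψ β c₁ c₂ : ℝ) (hφpos : 0 < φ) (hφψ : φ < ψ) (hβ : 1 / 2 < β)
    (hc₁ : 0 < c₁) (hc₂ : 0 < c₂)
    (φr : (n : ℕ) → Fin ⌊c₁ * (n : ℝ) ^ β⌋₊ → ℝ)
    (ψr : (n : ℕ) → Fin ⌊c₂ * (n : ℝ) ^ β⌋₊ → ℝ)
    (hφr : ∀ n i, 0 < φr n i ∧ φr n i ≤ φ)
    (hψr : ∀ n i, ψ ≤ ψr n i)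
    (Φ : (n : ℕ) → Fin ⌊c₁ * (n : ℝ) ^ β⌋₊ → Ω → ℝ)
    (Ψ : (n : ℕ) → Fin ⌊c₂ * (n : ℝ) ^ β⌋₊ → Ω → ℝ)
    (hΦexp : ∀ n i, IsExpRV P (φr n i) (Φ n i))
    (hΨexp : ∀ n i, IsExpRV P (ψr n i) (Ψ n i))
    (hΦind : ∀ n, iIndepFun (Φ n) P)
    (hΨind : ∀ n, iIndepFun (Ψ n) P) :
    ∃ γ κ : ℝ, 0 < γ ∧ 0 < κ ∧
      Tendsto (fun n : ℕ =>
          P {ω | (Nat.card {i // γ * Real.log n ≤ Φ n i ω} : ℝ) ≤ (n : ℝ) ^ ((1 : ℝ) / 2 + κ)})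
        atTop (nhds 0) ∧
      Tendsto (fun n : ℕ =>
          P {ω | (n : ℝ) ^ ((1 : ℝ) / 2 - κ) ≤ (Nat.card {i // γ * Real.log n ≤ Ψ n i ω} : ℝ)})
        atTop (nhds 0) := by
  classical
  have hψpos : 0 < ψ := hφpos.trans hφψ
  have hsum : (0:ℝ) < φ + ψ := by linarith
  have h2β : (0:ℝ) < 2*β - 1 := by linarith
  refine ⟨(2*β-1)/(φ+ψ), (2*β-1)*(ψ-φ)/(4*(φ+ψ)), div_pos h2β hsum,
    div_pos (mul_pos h2β (by linarith)) (by linarith), ?_, ?_⟩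
  · refine tendsto_zero_of_le _ (8/c₁) _ (div_pos (mul_pos h2β (by linarith)) (by linarith))
      (phi_side P φ c₁ _ _ β hφpos (div_pos h2β hsum)
        (div_pos (mul_pos h2β (by linarith)) (by linarith)) hc₁ ?_ φr hφr Φ hΦexp hΦind)
    field_simp
    ring
  · refine tendsto_zero_of_le _ (c₂ * Real.exp ψ) _
      (div_pos (mul_pos h2β (by linarith)) (by linarith))
      (psi_side P ψ c₂ _ _ β hψpos (div_pos h2β hsum)
        (div_pos (mul_pos h2β (by linarith)) (by linarith)) hc₂ ?_ ψr hψr Ψ hΨexp)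
    field_simp
    ring
end

section
/- Let φ > 0, β > 1/2, c₁ > 0, and let γ > 0 and κ > 0 satisfy φγ < β − 1/2 − κ. For each n ∈ ℕ set ℓₙ = ⌊c₁ nᵝ⌋ and let Φⁿ₁,…,Φⁿ_{ℓₙ} be mutually independent random variables, each exponentially distributed with some rate lying in (0, φ]. Then P(#{i ≤ ℓₙ : Φⁿᵢ ≥ γ log n} ≤ n^{1/2+κ}) → 0 as n → ∞. -/
open MeasureTheory ProbabilityTheory Filter

theorem stmt_1
    {Ω : Type*} [MeasurableSpace Ω] (P : Measure Ω) [IsProbabilityMeasure P]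
    (φ β c₁ γ κ : ℝ) (hφpos : 0 < φ) (hβ : 1 / 2 < β) (hc₁ : 0 < c₁)
    (hγ : 0 < γ) (hκ : 0 < κ) (hκγ : φ * γ < β - 1 / 2 - κ)
    (φr : (n : ℕ) → Fin ⌊c₁ * (n : ℝ) ^ β⌋₊ → ℝ)
    (hφr : ∀ n i, 0 < φr n i ∧ φr n i ≤ φ)
    (Φ : (n : ℕ) → Fin ⌊c₁ * (n : ℝ) ^ β⌋₊ → Ω → ℝ)
    (hΦexp : ∀ n i, IsExpRV P (φr n i) (Φ n i))
    (hΦind : ∀ n, iIndepFun (Φ n) P) :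
    Tendsto (fun n : ℕ =>
        P {ω | (Nat.card {i // γ * Real.log n ≤ Φ n i ω} : ℝ) ≤ (n : ℝ) ^ ((1 : ℝ) / 2 + κ)})
      atTop (nhds 0) := by
  classical
  set δ : ℝ := β - φ * γ with hδdef
  have hδ : 1 / 2 + κ < δ := by simp only [hδdef]; linarith
  have hδpos : 0 < δ := by linarith
  -- eventual deterministic facts
  have hE1 : ∀ᶠ n : ℕ in atTop, 1 ≤ n := eventually_ge_atTop 1
  have hE2 : ∀ᶠ n : ℕ in atTop, 2 ≤ c₁ * (n : ℝ) ^ β := by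
    have h := (tendsto_rpow_atTop (by linarith : (0:ℝ) < β)).comp
      tendsto_natCast_atTop_atTop (α := ℕ)
    exact (h.const_mul_atTop hc₁).eventually_ge_atTop 2
  have hE3 : ∀ᶠ n : ℕ in atTop,
      (n : ℝ) ^ ((1:ℝ) / 2 + κ) ≤ c₁ / 4 * (n : ℝ) ^ δ := by
    have hlim : Tendsto (fun n : ℕ => (n : ℝ) ^ (-(δ - (1/2 + κ)))) atTop (nhds 0) :=
      (tendsto_rpow_neg_atTop (by linarith)).comp tendsto_natCast_atTop_atTop
    have hsmall : ∀ᶠ n : ℕ in atTop, (n : ℝ) ^ (-(δ - (1/2 + κ))) ≤ c₁ / 4 :=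
      hlim.eventually (eventually_le_nhds (by positivity))
    filter_upwards [hsmall, hE1] with n hsm hn1
    have hnpos : (0:ℝ) < n := by exact_mod_cast hn1
    have : (n : ℝ) ^ ((1:ℝ)/2 + κ) = (n : ℝ) ^ (-(δ - (1/2 + κ))) * (n : ℝ) ^ δ := by
      rw [← Real.rpow_add hnpos]; ring_nf
    rw [this]
    have hd : (0:ℝ) ≤ (n:ℝ) ^ δ := (Real.rpow_pos_of_pos hnpos δ).le
    exact mul_le_mul_of_nonneg_right hsm hd
  -- the key probability bound
  have hkey : ∀ᶠ n : ℕ in atTop,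
      P {ω | (Nat.card {i // γ * Real.log n ≤ Φ n i ω} : ℝ) ≤ (n : ℝ) ^ ((1 : ℝ) / 2 + κ)}
        ≤ ENNReal.ofReal (8 / c₁ * (n : ℝ) ^ (-δ)) := by
    filter_upwards [hE1, hE2, hE3] with n hn1 hn2 hn3
    have hnpos : (0:ℝ) < n := by exact_mod_cast hn1
    set c : ℝ := γ * Real.log n with hc
    have hcnn : 0 ≤ c := mul_nonneg hγ.le (Real.log_natCast_nonneg n)
    set ℓ : ℕ := ⌊c₁ * (n : ℝ) ^ β⌋₊ with hℓ
    set A : Fin ℓ → Set Ω := fun i => {ω | c ≤ Φ n i ω} with hA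
    have hAm : ∀ i, MeasurableSet (A i) := fun i => (hΦexp n i).1 measurableSet_Ici
    set X : Fin ℓ → Ω → ℝ := fun i => (A i).indicator (fun _ => 1) with hX
    have hXℒ : ∀ i, MemLp (X i) 2 P := fun i =>
      memLp_indicator_const 2 (hAm i) 1 (Or.inr (measure_ne_top P _))
    set S : Ω → ℝ := fun ω => ∑ i, X i ω with hS
    set p : Fin ℓ → ℝ := fun i => (P (A i)).toReal with hp
    set μn : ℝ := ∑ i, p i with hμn
    set t : ℝ := (n : ℝ) ^ ((1:ℝ)/2 + κ) with ht
    -- expectations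
    have hEX : ∀ i, P[X i] = p i := by
      intro i
      have := integral_indicator_const (μ := P) (1 : ℝ) (hAm i)
      simpa [hX, hp, measureReal_def] using this
    have hES : P[S] = μn := by
      have : P[S] = ∑ i, P[X i] :=
        integral_finset_sum Finset.univ (fun i _ => (hXℒ i).integrable one_le_two)
      rw [this, hμn]
      exact Finset.sum_congr rfl fun i _ => hEX i
    -- variance bounds
    have hXsq : ∀ i, (X i) ^ 2 = X i := by
      intro i
      funext ω
      simp only [Pi.pow_apply, hX, Set.indicator_apply]
      split <;> norm_num
    have hVarX : ∀ i, variance (X i) P ≤ p i := by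
      intro i
      rw [variance_eq_sub (hXℒ i), hXsq i, hEX i]
      nlinarith [sq_nonneg (p i)]
    -- independence of the indicators
    have hind : iIndepFun X P := by
      have := (hΦind n).comp (fun _ => (Set.Ici c).indicator (fun _ => (1:ℝ)))
        (fun _ => measurable_const.indicator measurableSet_Ici)
      have heq : X = fun i => ((Set.Ici c).indicator (fun _ => (1:ℝ))) ∘ Φ n i := by
        funext i ω
        simp [hX, hA, Set.indicator_apply, Set.mem_Ici, Function.comp]
      rw [heq]
      exact this
    have hVarS : variance S P ≤ μn := by
      have heq : variance (∑ i, X i) P = ∑ i, variance (X i) P :=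
        IndepFun.variance_sum (fun i _ => hXℒ i)
          (fun i _ j _ hij => hind.indepFun hij)
      have hSeq : S = ∑ i, X i := by funext ω; simp [hS]
      rw [hSeq, heq, hμn]
      exact Finset.sum_le_sum fun i _ => hVarX i
    have hSℒ : MemLp S 2 P := by
      have : MemLp (∑ i, X i) 2 P := memLp_finset_sum' _ (fun i _ => hXℒ i)
      convert this using 1
      funext ω; simp [hS]
    -- lower bound for p i
    have hpr : ∀ i, (n : ℝ) ^ (-(φ * γ)) ≤ p i := by
      intro i
      have h1 : P {ω | c < Φ n i ω} ≤ P (A i) :=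
        measure_mono fun ω (hω : c < Φ n i ω) => (le_of_lt hω : c ≤ Φ n i ω)
      have h2 : P {ω | c < Φ n i ω} = ENNReal.ofReal (Real.exp (-(φr n i) * c)) :=
        (hΦexp n i).2 c hcnn
      have h3 : Real.exp (-φ * c) ≤ Real.exp (-(φr n i) * c) := by
        apply Real.exp_le_exp.2
        have := (hφr n i).2
        nlinarith
      have h4 : (n : ℝ) ^ (-(φ * γ)) = Real.exp (-φ * c) := by
        rw [Real.rpow_def_of_pos hnpos, hc]; ring_nf
      rw [h4]
      calc Real.exp (-φ * c) ≤ Real.exp (-(φr n i) * c) := h3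
        _ = (ENNReal.ofReal (Real.exp (-(φr n i) * c))).toReal := by
            rw [ENNReal.toReal_ofReal (Real.exp_nonneg _)]
        _ ≤ (P (A i)).toReal := by
            apply ENNReal.toReal_mono (measure_ne_top P _)
            rw [← h2]; exact h1
    -- lower bound for μn
    have hμL : c₁ / 2 * (n : ℝ) ^ δ ≤ μn := by
      have hcard : (ℓ : ℝ) • ((n:ℝ) ^ (-(φ * γ))) ≤ μn := by
        have := Finset.card_nsmul_le_sum Finset.univ p ((n:ℝ) ^ (-(φ * γ)))
          (fun i _ => hpr i)
        simpa [hμn] using this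
      have hfloor : c₁ / 2 * (n : ℝ) ^ β ≤ (ℓ : ℝ) := by
        have h1 : c₁ * (n : ℝ) ^ β - 1 < (ℓ : ℝ) := Nat.sub_one_lt_floor _
        linarith
      have hrp : (0:ℝ) < (n:ℝ) ^ (-(φ * γ)) := Real.rpow_pos_of_pos hnpos _
      have h2 : c₁ / 2 * (n : ℝ) ^ β * (n:ℝ) ^ (-(φ * γ)) ≤ (ℓ : ℝ) * (n:ℝ) ^ (-(φ * γ)) :=
        mul_le_mul_of_nonneg_right hfloor hrp.le
      have h3 : c₁ / 2 * (n : ℝ) ^ β * (n:ℝ) ^ (-(φ * γ)) = c₁ / 2 * (n : ℝ) ^ δ := by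
        rw [mul_assoc, ← Real.rpow_add hnpos, hδdef]; ring_nf
      calc c₁ / 2 * (n : ℝ) ^ δ = c₁ / 2 * (n : ℝ) ^ β * (n:ℝ) ^ (-(φ * γ)) := h3.symm
        _ ≤ (ℓ : ℝ) * (n:ℝ) ^ (-(φ * γ)) := h2
        _ ≤ μn := by simpa [nsmul_eq_mul] using hcard
    have hLpos : (0:ℝ) < c₁ / 2 * (n : ℝ) ^ δ := by positivity
    have htμ : t ≤ μn / 2 := by
      have : t ≤ c₁ / 4 * (n : ℝ) ^ δ := hn3
      linarith
    have hμpos : 0 < μn := by linarith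
    have hgap : 0 < μn - t := by linarith
    -- rewrite the event
    have hcard : ∀ ω, (Nat.card {i // γ * Real.log n ≤ Φ n i ω} : ℝ) = S ω := by
      intro ω
      rw [Nat.card_eq_fintype_card, Fintype.card_subtype, Finset.card_filter]
      push_cast
      simp [hS, hX, hA, hc, Set.indicator_apply]
      convert rfl
    have hsetEq : {ω | (Nat.card {i // γ * Real.log n ≤ Φ n i ω} : ℝ) ≤ (n : ℝ) ^ ((1 : ℝ) / 2 + κ)}
        = {ω | S ω ≤ t} := by
      exact Set.ext fun ω => by
        simp only [Set.mem_setOf_eq]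
        rw [hcard ω]
    rw [hsetEq]
    -- Chebyshev
    have hsub : {ω | S ω ≤ t} ⊆ {ω | μn - t ≤ |S ω - P[S]|} := by
      intro ω hω
      simp only [Set.mem_setOf_eq] at hω ⊢
      rw [hES]
      have : μn - t ≤ μn - S ω := by linarith
      calc μn - t ≤ μn - S ω := this
        _ ≤ |S ω - μn| := by rw [abs_sub_comm]; exact le_abs_self _
    have hcheb := meas_ge_le_variance_div_sq (μ := P) hSℒ hgap
    have hreal : variance S P / (μn - t) ^ 2 ≤ 8 / c₁ * (n : ℝ) ^ (-δ) := by
      have h2 : μn / 2 ≤ μn - t := by linarith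
      have hVnn : 0 ≤ variance S P := variance_nonneg _ _
      have hstep1 : variance S P / (μn - t) ^ 2 ≤ μn / (μn / 2) ^ 2 := by
        apply div_le_div₀ hμpos.le hVarS (by positivity)
        exact pow_le_pow_left₀ (by positivity) h2 2
      have hstep2 : μn / (μn / 2) ^ 2 = 4 / μn := by
        field_simp; ring
      have hstep3 : 4 / μn ≤ 4 / (c₁ / 2 * (n : ℝ) ^ δ) :=
        div_le_div_of_nonneg_left (by norm_num) hLpos hμL
      have hstep4 : 4 / (c₁ / 2 * (n : ℝ) ^ δ) = 8 / c₁ * (n : ℝ) ^ (-δ) := by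
        rw [Real.rpow_neg hnpos.le]
        have hne : ((n:ℝ) ^ δ) ≠ 0 := (Real.rpow_pos_of_pos hnpos δ).ne'
        field_simp
        ring
      calc variance S P / (μn - t) ^ 2 ≤ μn / (μn / 2) ^ 2 := hstep1
        _ = 4 / μn := hstep2
        _ ≤ 4 / (c₁ / 2 * (n : ℝ) ^ δ) := hstep3
        _ = 8 / c₁ * (n : ℝ) ^ (-δ) := hstep4
    calc P {ω | S ω ≤ t} ≤ P {ω | μn - t ≤ |S ω - P[S]|} := measure_mono hsub
      _ ≤ ENNReal.ofReal (variance S P / (μn - t) ^ 2) := hcheb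
      _ ≤ ENNReal.ofReal (8 / c₁ * (n : ℝ) ^ (-δ)) := ENNReal.ofReal_le_ofReal hreal
  -- conclude by squeezing
  have hupper : Tendsto (fun n : ℕ => ENNReal.ofReal (8 / c₁ * (n : ℝ) ^ (-δ))) atTop (nhds 0) := by
    have h1 : Tendsto (fun n : ℕ => 8 / c₁ * (n : ℝ) ^ (-δ)) atTop (nhds 0) := by
      have := (tendsto_rpow_neg_atTop hδpos).comp (tendsto_natCast_atTop_atTop (R := ℝ))
      simpa using this.const_mul (8 / c₁)
    have := (ENNReal.continuous_ofReal.tendsto 0).comp h1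
    rw [ENNReal.ofReal_zero] at this
    exact this
  refine tendsto_of_tendsto_of_tendsto_of_le_of_le' tendsto_const_nhds hupper ?_ hkey
  exact Eventually.of_forall fun n => zero_le
end

section
/- Let ψ > 0, β > 1/2, c₂ > 0, and let γ > 0 and κ > 0 satisfy β − 1/2 + κ < ψγ. For each n ∈ ℕ set ℓₙ = ⌊c₂ nᵝ⌋ and let Ψⁿ₁,…,Ψⁿ_{ℓₙ} be mutually independent random variables, each exponentially distributed with some rate lying in [ψ, ∞). Then P(#{i ≤ ℓₙ : Ψⁿᵢ ≥ γ log n} ≥ n^{1/2−κ}) → 0 as n → ∞. -/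
open MeasureTheory ProbabilityTheory Filter

theorem stmt_2
    {Ω : Type*} [MeasurableSpace Ω] (P : Measure Ω) [IsProbabilityMeasure P]
    (ψ β c₂ γ κ : ℝ) (hψpos : 0 < ψ) (hβ : 1 / 2 < β) (hc₂ : 0 < c₂)
    (hγ : 0 < γ) (hκ : 0 < κ) (hκγ : β - 1 / 2 + κ < ψ * γ)
    (ψr : (n : ℕ) → Fin ⌊c₂ * (n : ℝ) ^ β⌋₊ → ℝ)
    (hψr : ∀ n i, ψ ≤ ψr n i)
    (Ψ : (n : ℕ) → Fin ⌊c₂ * (n : ℝ) ^ β⌋₊ → Ω → ℝ)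
    (hΨexp : ∀ n i, IsExpRV P (ψr n i) (Ψ n i))
    (hΨind : ∀ n, iIndepFun (Ψ n) P) :
    Tendsto (fun n : ℕ =>
        P {ω | (n : ℝ) ^ ((1 : ℝ) / 2 - κ) ≤ (Nat.card {i // γ * Real.log n ≤ Ψ n i ω} : ℝ)})
      atTop (nhds 0) := by
  classical
  set r : ℝ := β - ψ * γ - (1 / 2 - κ) with hr
  have hrneg : r < 0 := by rw [hr]; linarith
  -- the dominating sequence
  have hgtend : Tendsto (fun n : ℕ => ENNReal.ofReal (c₂ * Real.exp ψ * (n : ℝ) ^ r))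
      atTop (nhds 0) := by
    have h1 : Tendsto (fun x : ℝ => x ^ r) atTop (nhds 0) := by
      have := tendsto_rpow_neg_atTop (y := -r) (by linarith)
      simpa using this
    have h2 : Tendsto (fun n : ℕ => c₂ * Real.exp ψ * (n : ℝ) ^ r) atTop (nhds 0) := by
      have := (h1.comp tendsto_natCast_atTop_atTop).const_mul (c₂ * Real.exp ψ)
      simpa using this
    have := ENNReal.tendsto_ofReal h2
    simpa using this
  -- eventual bound
  have hlogtend : Tendsto (fun n : ℕ => γ * Real.log n) atTop atTop := by
    exact (Real.tendsto_log_atTop.comp tendsto_natCast_atTop_atTop).const_mul_atTop hγ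
  have hupper : ∀ᶠ n : ℕ in atTop,
      P {ω | (n : ℝ) ^ ((1 : ℝ) / 2 - κ) ≤ (Nat.card {i // γ * Real.log n ≤ Ψ n i ω} : ℝ)}
        ≤ ENNReal.ofReal (c₂ * Real.exp ψ * (n : ℝ) ^ r) := by
    filter_upwards [eventually_ge_atTop 1, hlogtend.eventually_ge_atTop 1] with n hn1 hlog
    have hnpos : (0 : ℝ) < n := by exact_mod_cast hn1
    set c : ℝ := γ * Real.log n with hc
    have ht : (0 : ℝ) ≤ c - 1 := by linarith
    have hmeas_i : ∀ i, MeasurableSet {ω | c ≤ Ψ n i ω} := fun i =>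
      measurableSet_le measurable_const (hΨexp n i).1
    set f : Ω → ENNReal := fun ω =>
      ∑ i : Fin ⌊c₂ * (n : ℝ) ^ β⌋₊, Set.indicator {ω | c ≤ Ψ n i ω} (fun _ => 1) ω with hf
    have hf_meas : Measurable f :=
      Finset.measurable_sum _ fun i _ => measurable_const.indicator (hmeas_i i)
    have hcount : ∀ ω, ((Nat.card {i // c ≤ Ψ n i ω} : ENNReal)) = f ω := by
      intro ω
      rw [Nat.card_eq_fintype_card, Fintype.card_subtype, Finset.card_filter]
      push_cast
      refine Finset.sum_congr rfl fun i _ => ?_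
      by_cases h : c ≤ Ψ n i ω <;> simp [Set.indicator, h]
    have hεpos : (0 : ℝ) < (n : ℝ) ^ ((1 : ℝ) / 2 - κ) := Real.rpow_pos_of_pos hnpos _
    -- Markov
    have hset : {ω | (n : ℝ) ^ ((1 : ℝ) / 2 - κ) ≤ (Nat.card {i // c ≤ Ψ n i ω} : ℝ)}
        = {ω | ENNReal.ofReal ((n : ℝ) ^ ((1 : ℝ) / 2 - κ)) ≤ f ω} := by
      ext ω
      simp only [Set.mem_setOf_eq, ← hcount ω, ← ENNReal.ofReal_natCast]
      rw [ENNReal.ofReal_le_ofReal_iff (by positivity)]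
    have hmark := meas_ge_le_lintegral_div (μ := P) hf_meas.aemeasurable
      (ε := ENNReal.ofReal ((n : ℝ) ^ ((1 : ℝ) / 2 - κ)))
      (by simp only [ne_eq, ENNReal.ofReal_eq_zero, not_le]; exact hεpos) ENNReal.ofReal_ne_top
    rw [← hset] at hmark
    -- compute the integral
    have hint : ∫⁻ ω, f ω ∂P = ∑ i : Fin ⌊c₂ * (n : ℝ) ^ β⌋₊, P {ω | c ≤ Ψ n i ω} := by
      rw [hf, lintegral_finset_sum _ (fun i _ => measurable_const.indicator (hmeas_i i))]
      refine Finset.sum_congr rfl fun i _ => ?_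
      rw [lintegral_indicator (hmeas_i i)]
      simp
    -- bound each term
    have hterm : ∀ i : Fin ⌊c₂ * (n : ℝ) ^ β⌋₊,
        P {ω | c ≤ Ψ n i ω} ≤ ENNReal.ofReal (Real.exp ψ * (n : ℝ) ^ (-(ψ * γ))) := by
      intro i
      have hsub : {ω | c ≤ Ψ n i ω} ⊆ {ω | c - 1 < Ψ n i ω} := fun ω h => by
        simp only [Set.mem_setOf_eq] at *; linarith
      calc P {ω | c ≤ Ψ n i ω} ≤ P {ω | c - 1 < Ψ n i ω} := measure_mono hsub
        _ = ENNReal.ofReal (Real.exp (-(ψr n i) * (c - 1))) := (hΨexp n i).2 _ ht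
        _ ≤ ENNReal.ofReal (Real.exp ψ * (n : ℝ) ^ (-(ψ * γ))) := by
            apply ENNReal.ofReal_le_ofReal
            rw [Real.rpow_def_of_pos hnpos, ← Real.exp_add]
            apply Real.exp_le_exp.mpr
            have h1 : ψ * (c - 1) ≤ ψr n i * (c - 1) :=
              mul_le_mul_of_nonneg_right (hψr n i) ht
            have h2 : ψ * c = Real.log n * (ψ * γ) := by rw [hc]; ring
            nlinarith [h1, h2]
    have hsum : ∑ i : Fin ⌊c₂ * (n : ℝ) ^ β⌋₊, P {ω | c ≤ Ψ n i ω}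
        ≤ (⌊c₂ * (n : ℝ) ^ β⌋₊ : ENNReal) * ENNReal.ofReal (Real.exp ψ * (n : ℝ) ^ (-(ψ * γ))) := by
      calc ∑ i : Fin ⌊c₂ * (n : ℝ) ^ β⌋₊, P {ω | c ≤ Ψ n i ω}
          ≤ ∑ _i : Fin ⌊c₂ * (n : ℝ) ^ β⌋₊,
              ENNReal.ofReal (Real.exp ψ * (n : ℝ) ^ (-(ψ * γ))) :=
            Finset.sum_le_sum fun i _ => hterm i
        _ = (⌊c₂ * (n : ℝ) ^ β⌋₊ : ENNReal) * ENNReal.ofReal (Real.exp ψ * (n : ℝ) ^ (-(ψ * γ))) := by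
            simp [Finset.sum_const, mul_comm]
    -- put everything together
    refine hmark.trans ?_
    rw [hint]
    have hfloor : (⌊c₂ * (n : ℝ) ^ β⌋₊ : ℝ) ≤ c₂ * (n : ℝ) ^ β :=
      Nat.floor_le (by positivity)
    have hdivle : (∑ i : Fin ⌊c₂ * (n : ℝ) ^ β⌋₊, P {ω | c ≤ Ψ n i ω})
          / ENNReal.ofReal ((n : ℝ) ^ ((1 : ℝ) / 2 - κ))
        ≤ ENNReal.ofReal ((c₂ * (n : ℝ) ^ β * (Real.exp ψ * (n : ℝ) ^ (-(ψ * γ))))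
            / (n : ℝ) ^ ((1 : ℝ) / 2 - κ)) := by
      rw [ENNReal.ofReal_div_of_pos hεpos]
      apply ENNReal.div_le_div_right
      refine hsum.trans ?_
      rw [← ENNReal.ofReal_natCast, ← ENNReal.ofReal_mul (by positivity)]
      apply ENNReal.ofReal_le_ofReal
      apply mul_le_mul_of_nonneg_right hfloor (by positivity)
    refine hdivle.trans (ENNReal.ofReal_le_ofReal (le_of_eq ?_))
    rw [hr]
    have hpow : (n:ℝ) ^ (β - ψ * γ - (1 / 2 - κ))
        = (n:ℝ) ^ β * (n:ℝ) ^ (-(ψ * γ)) / (n:ℝ) ^ ((1:ℝ) / 2 - κ) := by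
      rw [Real.rpow_sub hnpos, Real.rpow_sub hnpos, Real.rpow_neg hnpos.le]
      ring
    rw [hpow]
    ring
  exact tendsto_of_tendsto_of_tendsto_of_le_of_le' tendsto_const_nhds hgtend
    (Eventually.of_forall fun n => zero_le) hupper
end

section
/- Let φ > 0, β > 1/2, c₁ > 0, and let γ > 0 and κ > 0 satisfy φγ < β − 1/2 − κ. For each n ∈ ℕ set ℓₙ = ⌊c₁ nᵝ⌋ and let Φⁿ₁,…,Φⁿ_{ℓₙ} be mutually independent random variables on a common probability space, each exponentially distributed with some rate lying in (0, φ] (no independence across different n is assumed). Then, almost surely, for all but finitely many n one has #{i ≤ ℓₙ : Φⁿᵢ ≥ γ log n} > n^{1/2+κ}. -/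
open MeasureTheory ProbabilityTheory Filter

lemma aux_pigeon {ℓ K : ℕ} (p : Fin ℓ → Prop) [DecidablePred p]
    (h : (Finset.univ.filter p).card < K) :
    ∃ r < K, ∀ i : Fin ℓ, i.val % K = r → ¬ p i := by
  classical
  set S := (Finset.univ.filter p).image (fun i : Fin ℓ => i.val % K) with hS
  have hcard : S.card < K := lt_of_le_of_lt Finset.card_image_le h
  have hex : ∃ r ∈ Finset.range K, r ∉ S := by
    by_contra hcon
    push_neg at hcon
    have hsub : Finset.range K ⊆ S := fun r hr => hcon r hr
    have := Finset.card_le_card hsub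
    rw [Finset.card_range] at this
    omega
  obtain ⟨r, hr, hrS⟩ := hex
  refine ⟨r, Finset.mem_range.mp hr, fun i hi hpi => hrS ?_⟩
  exact Finset.mem_image.mpr ⟨i, Finset.mem_filter.mpr ⟨Finset.mem_univ _, hpi⟩, hi⟩

lemma aux_card {ℓ K : ℕ} (hK : 0 < K) {r : ℕ} (hr : r < K) :
    ℓ / K ≤ (Finset.univ.filter (fun i : Fin ℓ => i.val % K = r)).card := by
  classical
  rcases Nat.eq_zero_or_pos (ℓ / K) with h0 | h0
  · simp [h0]
  · have hKℓ : K ≤ ℓ := by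
      by_contra hcon
      have : ℓ / K = 0 := Nat.div_eq_of_lt (lt_of_not_ge hcon)
      omega
    have hℓ : 0 < ℓ := lt_of_lt_of_le hK hKℓ
    have hlt : ∀ j, j < ℓ / K → j * K + r < ℓ := by
      intro j hj
      have h1 : (j + 1) * K ≤ (ℓ / K) * K := Nat.mul_le_mul_right _ hj
      have h2 : (ℓ / K) * K ≤ ℓ := Nat.div_mul_le_self _ _
      have : j * K + K ≤ ℓ := by nlinarith
      omega
    have := Finset.card_le_card_of_injOn
      (f := fun j => (⟨(j * K + r) % ℓ, Nat.mod_lt _ hℓ⟩ : Fin ℓ))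
      (s := Finset.range (ℓ / K))
      (t := Finset.univ.filter (fun i : Fin ℓ => i.val % K = r))
      (by
        intro j hj
        have hj' := Finset.mem_range.mp hj
        have hmod : (j * K + r) % ℓ = j * K + r := Nat.mod_eq_of_lt (hlt j hj')
        simp only [Finset.mem_filter, Finset.mem_univ, true_and]
        simp only [hmod]
        simp only [Finset.coe_filter, Finset.mem_univ, true_and, Set.mem_setOf_eq]
        rw [Nat.mul_comm j K, Nat.mul_add_mod]
        exact Nat.mod_eq_of_lt hr
        )
      (by
        intro j1 h1 j2 h2 heq
        have h1' := Finset.mem_range.mp (by simpa using h1)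
        have h2' := Finset.mem_range.mp (by simpa using h2)
        have hm1 : (j1 * K + r) % ℓ = j1 * K + r := Nat.mod_eq_of_lt (hlt _ h1')
        have hm2 : (j2 * K + r) % ℓ = j2 * K + r := Nat.mod_eq_of_lt (hlt _ h2')
        have : (j1 * K + r) % ℓ = (j2 * K + r) % ℓ := congrArg Fin.val heq
        rw [hm1, hm2] at this
        have := Nat.add_right_cancel this
        exact Nat.eq_of_mul_eq_mul_right hK this)
    simpa using this

lemma key_bound {Ω : Type*} [MeasurableSpace Ω] (P : Measure Ω) [IsProbabilityMeasure P]
    (φ L q : ℝ) (hφpos : 0 < φ) (hL : 0 ≤ L) (hq : q = Real.exp (-(φ * L)))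
    {ℓ : ℕ} (K : ℕ) (hK : 0 < K)
    (φr : Fin ℓ → ℝ) (hφr : ∀ i, 0 < φr i ∧ φr i ≤ φ)
    (Φ : Fin ℓ → Ω → ℝ) (hΦexp : ∀ i, IsExpRV P (φr i) (Φ i))
    (hΦind : iIndepFun Φ P) :
    P {ω | (Finset.univ.filter (fun i => L ≤ Φ i ω)).card < K} ≤
      ENNReal.ofReal (K * Real.exp (-(q * (ℓ / K : ℕ)))) := by
  classical
  have hq0 : 0 < q := hq ▸ Real.exp_pos _
  have hq1 : q ≤ 1 := by
    rw [hq, ← Real.exp_zero]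
    exact Real.exp_le_exp.mpr (by nlinarith)
  set A : Fin ℓ → Set Ω := fun i => {ω | Φ i ω < L} with hA
  set M : ℕ := ℓ / K with hM
  have hsub : {ω | (Finset.univ.filter (fun i => L ≤ Φ i ω)).card < K} ⊆
      ⋃ r ∈ Finset.range K, ⋂ i ∈ (Finset.univ.filter fun i : Fin ℓ => i.val % K = r), A i := by
    intro ω hω
    obtain ⟨r, hrK, hr⟩ := aux_pigeon (fun i => L ≤ Φ i ω) hω
    refine Set.mem_biUnion (Finset.mem_range.mpr hrK) ?_
    refine Set.mem_iInter₂.mpr fun i hi => ?_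
    have : i.val % K = r := (Finset.mem_filter.mp hi).2
    exact not_le.mp (hr i this)
  have hterm : ∀ r ∈ Finset.range K,
      P (⋂ i ∈ (Finset.univ.filter fun i : Fin ℓ => i.val % K = r), A i) ≤
        ENNReal.ofReal (Real.exp (-(q * M))) := by
    intro r hr
    have hrK := Finset.mem_range.mp hr
    have hmeas : ∀ i, MeasurableSet[MeasurableSpace.comap (Φ i) inferInstance] (A i) :=
      fun i => ⟨Set.Iio L, measurableSet_Iio, rfl⟩
    rw [hΦind.meas_biInter (fun i _ => hmeas i)]
    have hfac : ∀ i : Fin ℓ, P (A i) ≤ ENNReal.ofReal (1 - q) := by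
      intro i
      have hΦm := (hΦexp i).1
      have h1 : P {ω | L < Φ i ω} = ENNReal.ofReal (Real.exp (-(φr i) * L)) :=
        (hΦexp i).2 L hL
      have hmono : P {ω | L < Φ i ω} ≤ P {ω | L ≤ Φ i ω} := by
        have hss : {ω | L < Φ i ω} ⊆ {ω | L ≤ Φ i ω} := by
          intro ω hω
          simp only [Set.mem_setOf_eq] at *
          exact le_of_lt hω
        exact measure_mono hss
      have h2 : ENNReal.ofReal q ≤ P {ω | L ≤ Φ i ω} := by
        refine le_trans ?_ hmono
        rw [h1, hq]
        exact ENNReal.ofReal_le_ofReal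
          (Real.exp_le_exp.mpr (by nlinarith [(hφr i).1, (hφr i).2]))
      have hcompl : A i = {ω | L ≤ Φ i ω}ᶜ := by
        ext ω; simp [hA, not_le]
      have hmeas' : MeasurableSet {ω | L ≤ Φ i ω} := hΦm measurableSet_Ici
      rw [hcompl, measure_compl hmeas' (measure_ne_top _ _), measure_univ]
      calc 1 - P {ω | L ≤ Φ i ω} ≤ 1 - ENNReal.ofReal q := tsub_le_tsub_left h2 1
        _ = ENNReal.ofReal (1 - q) := by
            rw [← ENNReal.ofReal_one, ← ENNReal.ofReal_sub _ hq0.le]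
    set J := (Finset.univ.filter fun i : Fin ℓ => i.val % K = r) with hJ
    calc ∏ i ∈ J, P (A i) ≤ ∏ _i ∈ J, ENNReal.ofReal (1 - q) :=
          Finset.prod_le_prod' fun i _ => hfac i
      _ = ENNReal.ofReal ((1 - q) ^ J.card) := by
          rw [Finset.prod_const, ENNReal.ofReal_pow (by linarith)]
      _ ≤ ENNReal.ofReal (Real.exp (-(q * M))) := by
          apply ENNReal.ofReal_le_ofReal
          have hbase : (1 - q) ≤ Real.exp (-q) := by
            have := Real.add_one_le_exp (-q); linarith
          calc (1 - q) ^ J.card ≤ Real.exp (-q) ^ J.card :=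
                pow_le_pow_left₀ (by linarith) hbase _
            _ = Real.exp ((J.card : ℝ) * (-q)) := by rw [Real.exp_nat_mul]
            _ ≤ Real.exp (-(q * M)) := by
                apply Real.exp_le_exp.mpr
                have hMle : (M : ℝ) ≤ (J.card : ℝ) := by
                  exact_mod_cast aux_card hK hrK
                nlinarith
  calc P _ ≤ P (⋃ r ∈ Finset.range K, ⋂ i ∈ (Finset.univ.filter fun i : Fin ℓ => i.val % K = r), A i) :=
        measure_mono hsub
    _ ≤ ∑ r ∈ Finset.range K, P (⋂ i ∈ (Finset.univ.filter fun i : Fin ℓ => i.val % K = r), A i) :=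
        measure_biUnion_finset_le _ _
    _ ≤ ∑ _r ∈ Finset.range K, ENNReal.ofReal (Real.exp (-(q * M))) :=
        Finset.sum_le_sum hterm
    _ = ENNReal.ofReal (K * Real.exp (-(q * M))) := by
        rw [Finset.sum_const, Finset.card_range, nsmul_eq_mul,
          ENNReal.ofReal_mul (Nat.cast_nonneg K), ENNReal.ofReal_natCast]

lemma key_asymp (φ β c₁ γ κ : ℝ) (hφpos : 0 < φ) (hβ : 1 / 2 < β) (hc₁ : 0 < c₁)
    (hγ : 0 < γ) (hκ : 0 < κ) (hκγ : φ * γ < β - 1 / 2 - κ) :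
    ∀ᶠ n : ℕ in atTop,
      ((⌊(n : ℝ) ^ ((1:ℝ)/2 + κ)⌋₊ + 1 : ℕ) : ℝ) *
        Real.exp (-(Real.exp (-(φ * γ * Real.log n)) *
          ((⌊c₁ * (n : ℝ) ^ β⌋₊ / (⌊(n : ℝ) ^ ((1:ℝ)/2 + κ)⌋₊ + 1) : ℕ) : ℝ)))
        ≤ (n : ℝ) ^ (-2 : ℝ) := by
  set s : ℝ := (1:ℝ)/2 + κ with hs
  set δ : ℝ := β - s - φ * γ with hδdef
  have hδ : 0 < δ := by rw [hδdef, hs]; linarith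
  have hs0 : 0 < s := by rw [hs]; linarith
  set a : ℝ := s + 2 with ha
  have hb4 : (0:ℝ) < c₁ / 4 := by linarith
  -- eventual fact: (c₁/4) * x^δ ≥ 3/2
  have hA : Tendsto (fun x : ℝ => (c₁/4) * x ^ δ) atTop atTop :=
    (tendsto_rpow_atTop hδ).const_mul_atTop hb4
  have h2 : ∀ᶠ n : ℕ in atTop, (3:ℝ)/2 ≤ (c₁/4) * (n : ℝ) ^ δ :=
    (hA.comp tendsto_natCast_atTop_atTop).eventually_ge_atTop _
  -- eventual fact: x^a * exp(-((c₁/4) x^δ)) ≤ 1/2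
  have h1' := tendsto_rpow_mul_exp_neg_mul_atTop_nhds_zero (a/δ) (c₁/4) hb4
  have h2' := h1'.comp (tendsto_rpow_atTop hδ)
  have heq : (fun x : ℝ => x ^ a * Real.exp (-((c₁/4) * x ^ δ)))
      =ᶠ[atTop] (fun x : ℝ => (x ^ δ) ^ (a/δ) * Real.exp (-(c₁/4) * x ^ δ)) := by
    filter_upwards [eventually_gt_atTop (0:ℝ)] with x hx
    rw [← Real.rpow_mul hx.le, neg_mul]
    congr 2
    field_simp
  have h3' : Tendsto (fun x : ℝ => x ^ a * Real.exp (-((c₁/4) * x ^ δ))) atTop (nhds 0) :=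
    Filter.Tendsto.congr' heq.symm h2'
  have h3 : ∀ᶠ n : ℕ in atTop,
      (n : ℝ) ^ a * Real.exp (-((c₁/4) * (n : ℝ) ^ δ)) ≤ 1/2 :=
    ((h3'.comp tendsto_natCast_atTop_atTop).eventually_lt_const (by norm_num)).mono
      fun n h => le_of_lt h
  filter_upwards [h2, h3, eventually_ge_atTop 1] with n h2n h3n hn1
  have hx1 : (1:ℝ) ≤ (n : ℝ) := by exact_mod_cast hn1
  have hx0 : (0:ℝ) < (n : ℝ) := by linarith
  set x : ℝ := (n : ℝ) with hxdef
  set Kn : ℕ := ⌊x ^ s⌋₊ + 1 with hKn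
  set ℓ : ℕ := ⌊c₁ * x ^ β⌋₊ with hℓ
  set Mn : ℕ := ℓ / Kn with hMn
  set q : ℝ := Real.exp (-(φ * γ * Real.log x)) with hqdef
  have hq_eq : q = x ^ (-(φ * γ)) := by
    rw [hqdef, Real.rpow_def_of_pos hx0]
    congr 1; ring
  have hqpos : 0 < q := Real.exp_pos _
  have hq1 : q ≤ 1 := by
    rw [hq_eq]
    exact Real.rpow_le_one_of_one_le_of_nonpos hx1 (by nlinarith)
  set u : ℝ := x ^ δ with hu
  set v : ℝ := x ^ s with hv
  set w : ℝ := x ^ β with hw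
  have hupos : 0 < u := Real.rpow_pos_of_pos hx0 _
  have hv1 : 1 ≤ v := by
    rw [hv]
    calc (1:ℝ) = x ^ (0:ℝ) := (Real.rpow_zero x).symm
    _ ≤ x ^ s := Real.rpow_le_rpow_of_exponent_le hx1 hs0.le
  have hKpos : (0:ℝ) < (Kn : ℝ) := by positivity
  have hK2 : (Kn : ℝ) ≤ 2 * v := by
    have h := Nat.floor_le (Real.rpow_nonneg hx0.le s)
    push_cast [hKn]
    rw [← hv] at h
    linarith
  have hf7 : q * w = u * v := by
    rw [hq_eq, hu, hv, hw, ← Real.rpow_add hx0, ← Real.rpow_add hx0]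
    congr 1
    rw [hδdef]; ring
  have step1 : (ℓ : ℝ) < (Kn : ℝ) * (Mn : ℝ) + (Kn : ℝ) := by
    have hdm := Nat.div_add_mod ℓ Kn
    have hml : ℓ % Kn < Kn := Nat.mod_lt _ (Nat.succ_pos _)
    have hnat : ℓ < Kn * Mn + Kn := by rw [hMn]; omega
    exact_mod_cast hnat
  have step2 : c₁ * w - 1 ≤ (ℓ : ℝ) := (Nat.sub_one_lt_floor _).le
  have hMr : (0:ℝ) ≤ (Mn : ℝ) := Nat.cast_nonneg _
  -- (i) main inequality times Kn
  have keymul : (c₁/4) * u * (Kn : ℝ) ≤ q * (Mn : ℝ) * (Kn : ℝ) := by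
    have g1 : q * (ℓ : ℝ) ≤ q * (Kn : ℝ) * (Mn : ℝ) + q * (Kn : ℝ) := by
      have h := mul_le_mul_of_nonneg_left step1.le hqpos.le
      linarith [h]
    have g1' : q * (Kn : ℝ) ≤ (Kn : ℝ) := mul_le_of_le_one_left hKpos.le hq1
    have g2 : c₁ * u * v - 1 ≤ q * (ℓ : ℝ) := by
      have h := mul_le_mul_of_nonneg_left step2 hqpos.le
      have h2 : c₁ * (q * w) - q ≤ q * (ℓ : ℝ) := by linarith [h]
      rw [hf7] at h2
      linarith [h2]
    have g3 : (c₁/4) * u * (Kn : ℝ) ≤ (c₁/2) * u * v := by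
      have h := mul_le_mul_of_nonneg_left hK2 (by positivity : (0:ℝ) ≤ (c₁/4) * u)
      linarith [h]
    have g4 : (c₁/2) * u * v + 1 + 2 * v ≤ c₁ * u * v := by
      have h6' : (3:ℝ) ≤ (c₁/2) * u := by linarith [h2n]
      have h7 : 3 * v ≤ (c₁/2) * u * v := by
        have := mul_le_mul_of_nonneg_right h6' (by linarith : (0:ℝ) ≤ v)
        linarith [this]
      linarith
    have g5 : q * (Kn : ℝ) * (Mn : ℝ) = q * (Mn : ℝ) * (Kn : ℝ) := by ring
    linarith [g1, g1', g2, g3, g4, hK2]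
  have keyi : (c₁/4) * u ≤ q * (Mn : ℝ) := le_of_mul_le_mul_right keymul hKpos
  -- final combination
  have hE : Real.exp (-(q * (Mn : ℝ))) ≤ Real.exp (-((c₁/4) * u)) :=
    Real.exp_le_exp.mpr (by linarith)
  set z : ℝ := x ^ (2:ℝ) with hz
  have hzpos : 0 < z := Real.rpow_pos_of_pos hx0 _
  have hxneg2 : x ^ (-2:ℝ) = z⁻¹ := by rw [hz, ← Real.rpow_neg hx0.le]
  have hva : v * z = x ^ a := by
    rw [hv, hz, ha, ← Real.rpow_add hx0]
  have hfin : (Kn : ℝ) * Real.exp (-(q * (Mn : ℝ))) ≤ x ^ (-2:ℝ) := by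
    rw [hxneg2, inv_eq_one_div, le_div_iff₀ hzpos]
    have hEnn : (0:ℝ) ≤ Real.exp (-((c₁/4) * u)) := (Real.exp_pos _).le
    have hEnn2 : (0:ℝ) ≤ Real.exp (-(q * (Mn : ℝ))) := (Real.exp_pos _).le
    have hstep : (Kn : ℝ) * Real.exp (-(q * (Mn : ℝ))) ≤ 2 * v * Real.exp (-((c₁/4) * u)) :=
      mul_le_mul hK2 hE hEnn2 (by linarith)
    have h3n' : v * z * Real.exp (-((c₁/4) * u)) ≤ 1/2 := by
      rw [hva]; exact h3n
    have t1 : (Kn : ℝ) * Real.exp (-(q * (Mn : ℝ))) * z ≤ (2 * v * Real.exp (-((c₁/4) * u))) * z :=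
      mul_le_mul_of_nonneg_right hstep hzpos.le
    have t2 : (2 * v * Real.exp (-((c₁/4) * u))) * z = 2 * (v * z * Real.exp (-((c₁/4) * u))) := by
      ring
    linarith [t1, h3n']
  exact hfin

theorem stmt_3
    {Ω : Type*} [MeasurableSpace Ω] (P : Measure Ω) [IsProbabilityMeasure P]
    (φ β c₁ γ κ : ℝ) (hφpos : 0 < φ) (hβ : 1 / 2 < β) (hc₁ : 0 < c₁)
    (hγ : 0 < γ) (hκ : 0 < κ) (hκγ : φ * γ < β - 1 / 2 - κ)
    (φr : (n : ℕ) → Fin ⌊c₁ * (n : ℝ) ^ β⌋₊ → ℝ)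
    (hφr : ∀ n i, 0 < φr n i ∧ φr n i ≤ φ)
    (Φ : (n : ℕ) → Fin ⌊c₁ * (n : ℝ) ^ β⌋₊ → Ω → ℝ)
    (hΦexp : ∀ n i, IsExpRV P (φr n i) (Φ n i))
    (hΦind : ∀ n, iIndepFun (Φ n) P) :
    ∀ᵐ ω ∂P, ∀ᶠ n : ℕ in atTop,
      (n : ℝ) ^ ((1 : ℝ) / 2 + κ) < (Nat.card {i // γ * Real.log n ≤ Φ n i ω} : ℝ) := by
  classical
  set Q : ℕ → Ω → Prop := fun n ω =>
    (Nat.card {i // γ * Real.log n ≤ Φ n i ω} : ℝ) ≤ (n : ℝ) ^ ((1 : ℝ) / 2 + κ) with hQ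
  have hmb : ∀ᶠ n : ℕ in atTop, P {ω | Q n ω} ≤ ENNReal.ofReal ((n : ℝ) ^ (-2 : ℝ)) := by
    filter_upwards [key_asymp φ β c₁ γ κ hφpos hβ hc₁ hγ hκ hκγ, eventually_ge_atTop 1]
      with n hasym hn1
    set L : ℝ := γ * Real.log n with hLdef
    set Kn : ℕ := ⌊(n : ℝ) ^ ((1:ℝ)/2 + κ)⌋₊ + 1 with hKn
    have hKpos : 0 < Kn := Nat.succ_pos _
    have hL : 0 ≤ L := mul_nonneg hγ.le (Real.log_nonneg (by exact_mod_cast hn1))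
    have hcard : ∀ ω, (Nat.card {i // L ≤ Φ n i ω}) =
        (Finset.univ.filter (fun i => L ≤ Φ n i ω)).card := by
      intro ω
      simp [Nat.card_eq_fintype_card, Fintype.card_subtype]
    have hsub : {ω | Q n ω} ⊆
        {ω | (Finset.univ.filter (fun i => L ≤ Φ n i ω)).card < Kn} := by
      intro ω hω
      have h1 : (Nat.card {i // L ≤ Φ n i ω} : ℝ) ≤ (n : ℝ) ^ ((1 : ℝ) / 2 + κ) := hω
      have h2 : ((n : ℝ) ^ ((1 : ℝ) / 2 + κ)) < (Kn : ℝ) := by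
        rw [hKn]; push_cast
        exact Nat.lt_floor_add_one _
      have h3 : ((Finset.univ.filter (fun i => L ≤ Φ n i ω)).card : ℝ) < (Kn : ℝ) := by
        rw [← hcard ω]; linarith
      exact_mod_cast h3
    have hq_eq : Real.exp (-(φ * γ * Real.log n)) = Real.exp (-(φ * L)) := by
      rw [hLdef]; congr 1; ring
    calc P {ω | Q n ω}
        ≤ P {ω | (Finset.univ.filter (fun i => L ≤ Φ n i ω)).card < Kn} := measure_mono hsub
      _ ≤ ENNReal.ofReal ((Kn : ℝ) * Real.exp (-(Real.exp (-(φ * γ * Real.log n)) *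
            ((⌊c₁ * (n : ℝ) ^ β⌋₊ / Kn : ℕ) : ℝ)))) :=
          key_bound P φ L (Real.exp (-(φ * γ * Real.log n))) hφpos hL hq_eq Kn hKpos
            (φr n) (hφr n) (Φ n) (hΦexp n) (hΦind n)
      _ ≤ ENNReal.ofReal ((n : ℝ) ^ (-2 : ℝ)) := ENNReal.ofReal_le_ofReal hasym
  obtain ⟨N, hN⟩ := eventually_atTop.mp hmb
  have hsum : (∑' j : ℕ, P {ω | Q (j + N) ω}) ≠ ⊤ := by
    have hle : (∑' j : ℕ, P {ω | Q (j + N) ω}) ≤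
        ∑' j : ℕ, ENNReal.ofReal (((j + N : ℕ) : ℝ) ^ (-2 : ℝ)) :=
      ENNReal.tsum_le_tsum fun j => hN (j + N) (Nat.le_add_left _ _)
    have hle2 : (∑' j : ℕ, ENNReal.ofReal (((j + N : ℕ) : ℝ) ^ (-2 : ℝ))) ≤
        ∑' n : ℕ, ENNReal.ofReal ((n : ℝ) ^ (-2 : ℝ)) :=
      ENNReal.tsum_comp_le_tsum_of_injective (f := fun j : ℕ => j + N)
        (fun a b h => by simpa using h) (fun n => ENNReal.ofReal ((n : ℝ) ^ (-2 : ℝ)))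
    have hfin : (∑' n : ℕ, ENNReal.ofReal ((n : ℝ) ^ (-2 : ℝ))) ≠ ⊤ := by
      rw [← ENNReal.ofReal_tsum_of_nonneg
        (fun n => Real.rpow_nonneg (Nat.cast_nonneg n) _)
        (Real.summable_nat_rpow.mpr (by norm_num))]
      exact ENNReal.ofReal_ne_top
    exact ne_top_of_le_ne_top hfin (hle.trans hle2)
  have h0 : P {ω | ∃ᶠ j in atTop, Q (j + N) ω} = 0 :=
    measure_setOf_frequently_eq_zero hsum
  have hae : ∀ᵐ ω ∂P, ¬ ∃ᶠ j in atTop, Q (j + N) ω := by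
    rw [ae_iff]
    simpa only [not_not] using h0
  filter_upwards [hae] with ω hω
  rw [Filter.not_frequently] at hω
  obtain ⟨a, ha⟩ := eventually_atTop.mp hω
  rw [eventually_atTop]
  refine ⟨a + N, fun n hn => ?_⟩
  have h1 : ¬ Q n ω := by
    have h2 := ha (n - N) (by omega)
    rwa [Nat.sub_add_cancel (by omega)] at h2
  exact not_le.mp h1
end

section
/- Let φ > 0 and let Φ₁,…,Φ_ℓ be mutually independent random variables, each exponentially distributed with some rate lying in (0, φ]. Then for every θ > 0, every α ≥ 0 and every M ≥ 0, P(#{i ≤ ℓ : Φᵢ ≥ θ} ≤ M) ≤ exp(αM − ℓ e^{−φθ}(1 − e^{−α})). -/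
open MeasureTheory ProbabilityTheory Filter

theorem stmt_7
    {Ω : Type*} [MeasurableSpace Ω] (P : Measure Ω) [IsProbabilityMeasure P]
    (φ : ℝ) (hφ : 0 < φ) (ℓ : ℕ)
    (φr : Fin ℓ → ℝ) (hφr : ∀ i, 0 < φr i ∧ φr i ≤ φ)
    (Φ : Fin ℓ → Ω → ℝ)
    (hΦexp : ∀ i, IsExpRV P (φr i) (Φ i))
    (hΦind : iIndepFun Φ P)
    (θ α M : ℝ) (hθ : 0 < θ) (hα : 0 ≤ α) (hM : 0 ≤ M) :
    P {ω | (Nat.card {i // θ ≤ Φ i ω} : ℝ) ≤ M} ≤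
      ENNReal.ofReal (Real.exp (α * M - ℓ * Real.exp (-φ * θ) * (1 - Real.exp (-α)))) := by
  classical
  set f : ℝ → ℝ := fun t => if θ ≤ t then 1 else 0 with hf
  have hf_meas : Measurable f :=
    Measurable.ite (measurableSet_le measurable_const measurable_id)
      measurable_const measurable_const
  set X : Fin ℓ → Ω → ℝ := fun i ω => f (Φ i ω) with hX
  have hX_meas : ∀ i, Measurable (X i) := fun i => hf_meas.comp (hΦexp i).1
  have hX_ind : iIndepFun X P :=
    hΦind.comp (fun _ => f) (fun _ => hf_meas)
  have hX01 : ∀ i ω, X i ω = 0 ∨ X i ω = 1 := by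
    intro i ω
    by_cases h : θ ≤ Φ i ω <;> simp [hX, hf, h]
  have hX_nonneg : ∀ i ω, 0 ≤ X i ω := by
    intro i ω; rcases hX01 i ω with h | h <;> simp [h]
  -- the set in the statement equals a sublevel set of the sum
  have hset : {ω | (Nat.card {i // θ ≤ Φ i ω} : ℝ) ≤ M}
      = {ω | (∑ i, X i) ω ≤ M} := by
    ext ω
    have hcard : (Nat.card {i // θ ≤ Φ i ω} : ℝ) = (∑ i, X i) ω := by
      rw [Nat.card_eq_fintype_card, Fintype.card_subtype, Finset.card_filter]
      push_cast
      simp only [Finset.sum_apply]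
      rfl
    exact iff_of_eq (congrArg (· ≤ M) hcard)
  -- integrability of exp(-α * X i)
  have hint : ∀ i, Integrable (fun ω => Real.exp (-α * X i ω)) P := by
    intro i
    refine (integrable_const (1 : ℝ)).mono'
      (((hX_meas i).const_mul (-α)).exp.aestronglyMeasurable) ?_
    filter_upwards with ω
    rw [Real.norm_eq_abs, abs_of_pos (Real.exp_pos _), Real.exp_le_one_iff]
    have := hX_nonneg i ω
    nlinarith
  have hintS : Integrable (fun ω => Real.exp (-α * (∑ i, X i) ω)) P :=
    hX_ind.integrable_exp_mul_sum hX_meas (fun i _ => hint i)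
  -- Chernoff bound
  have hcher := measure_le_le_exp_mul_mgf (X := ∑ i, X i) (μ := P) M
    (neg_nonpos.mpr hα) hintS
  rw [hX_ind.mgf_sum hX_meas Finset.univ, neg_neg] at hcher
  -- per-index mgf computation and bound
  set c : ℝ := Real.exp (-(Real.exp (-φ * θ) * (1 - Real.exp (-α)))) with hc
  have hmgf_le : ∀ i, mgf (X i) P (-α) ≤ c := by
    intro i
    have hA : MeasurableSet {ω | θ ≤ Φ i ω} :=
      measurableSet_le measurable_const (hΦexp i).1
    set p : ℝ := (P {ω | θ ≤ Φ i ω}).toReal with hp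
    -- mgf value
    have hval : mgf (X i) P (-α) = 1 - p * (1 - Real.exp (-α)) := by
      have heq : (fun ω => Real.exp (-α * X i ω)) =
          fun ω => (Real.exp (-α) - 1) * ({ω | θ ≤ Φ i ω}.indicator (fun _ : Ω => (1:ℝ)) ω) + 1 := by
        funext ω
        by_cases h : θ ≤ Φ i ω <;>
          simp [hX, hf, h, Set.indicator_apply, Set.mem_setOf_eq]
      rw [mgf, heq]
      rw [integral_add ((((integrable_const (1:ℝ)).indicator hA)).const_mul _)
        (integrable_const 1)]
      rw [integral_const_mul, integral_indicator_const (1:ℝ) hA, integral_const]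
      simp only [measureReal_def, hp, measure_univ, ENNReal.toReal_one, one_smul, smul_eq_mul]
      ring
    -- p ≥ exp(-φθ)
    have hpge : Real.exp (-φ * θ) ≤ p := by
      have h1 : ENNReal.ofReal (Real.exp (-(φr i) * θ)) ≤ P {ω | θ ≤ Φ i ω} := by
        rw [← (hΦexp i).2 θ hθ.le]
        exact measure_mono (Set.setOf_subset_setOf.mpr (fun ω h => le_of_lt h))
      have h2 : ENNReal.ofReal (Real.exp (-φ * θ)) ≤ ENNReal.ofReal (Real.exp (-(φr i) * θ)) := by
        apply ENNReal.ofReal_le_ofReal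
        apply Real.exp_le_exp.2
        nlinarith [(hφr i).2]
      have h3 := h2.trans h1
      calc Real.exp (-φ * θ) = (ENNReal.ofReal (Real.exp (-φ * θ))).toReal := by
            rw [ENNReal.toReal_ofReal (Real.exp_pos _).le]
        _ ≤ p := ENNReal.toReal_mono (measure_ne_top _ _) h3
    have hq : 0 ≤ 1 - Real.exp (-α) := by
      have : Real.exp (-α) ≤ 1 := Real.exp_le_one_iff.2 (neg_nonpos.mpr hα)
      linarith
    rw [hval, hc]
    calc 1 - p * (1 - Real.exp (-α))
        ≤ 1 - Real.exp (-φ * θ) * (1 - Real.exp (-α)) := by nlinarith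
      _ ≤ Real.exp (-(Real.exp (-φ * θ) * (1 - Real.exp (-α)))) := by
          have := Real.add_one_le_exp (-(Real.exp (-φ * θ) * (1 - Real.exp (-α))))
          linarith
  -- product bound
  have hprod : ∏ i, mgf (X i) P (-α) ≤ c ^ ℓ := by
    calc ∏ i, mgf (X i) P (-α) ≤ ∏ _i : Fin ℓ, c :=
          Finset.prod_le_prod (fun i _ => mgf_nonneg) (fun i _ => hmgf_le i)
      _ = c ^ ℓ := by simp
  have hcpow : c ^ ℓ = Real.exp (-(ℓ * Real.exp (-φ * θ) * (1 - Real.exp (-α)))) := by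
    rw [hc, ← Real.exp_nat_mul]
    ring_nf
  have hfinal : (P {ω | (∑ i, X i) ω ≤ M}).toReal ≤
      Real.exp (α * M - ℓ * Real.exp (-φ * θ) * (1 - Real.exp (-α))) := by
    calc (P {ω | (∑ i, X i) ω ≤ M}).toReal
        ≤ Real.exp (α * M) * ∏ i, mgf (X i) P (-α) := hcher
      _ ≤ Real.exp (α * M) * c ^ ℓ := by
          apply mul_le_mul_of_nonneg_left hprod (Real.exp_pos _).le
      _ = Real.exp (α * M - ℓ * Real.exp (-φ * θ) * (1 - Real.exp (-α))) := by
          rw [hcpow, ← Real.exp_add]; ring_nf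
  rw [hset]
  calc P {ω | (∑ i, X i) ω ≤ M}
      = ENNReal.ofReal ((P {ω | (∑ i, X i) ω ≤ M}).toReal) := by
        rw [ENNReal.ofReal_toReal (measure_ne_top _ _)]
    _ ≤ _ := ENNReal.ofReal_le_ofReal hfinal
end

section
/- Let T > 0 and μ ≥ 0. Let X, ξ, W, V, e : [0, T] → ℝ be continuous functions and x₀, ξ₀, b, β ∈ ℝ such that X(t) = x₀ + W(t) + b·t + μ·∫₀ᵗ X(s)⁻ ds + e(t) and ξ(t) = ξ₀ + V(t) + β·t + μ·∫₀ᵗ ξ(s)⁻ ds for every t ∈ [0, T]. Then sup_{t ∈ [0,T]} |X(t) − ξ(t)| ≤ ( |x₀ − ξ₀| + |b − β|·T + sup_{t ∈ [0,T]} |W(t) − V(t)| + sup_{t ∈ [0,T]} |e(t)| ) · exp(μT). -/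
open MeasureTheory intervalIntegral

theorem stmt_14 (T μ : ℝ) (hT : 0 < T) (hμ : 0 ≤ μ)
    (X ξ W V e : ℝ → ℝ) (x₀ ξ₀ b β : ℝ)
    (hX : ContinuousOn X (Set.Icc 0 T)) (hξ : ContinuousOn ξ (Set.Icc 0 T))
    (hW : ContinuousOn W (Set.Icc 0 T)) (hV : ContinuousOn V (Set.Icc 0 T))
    (he : ContinuousOn e (Set.Icc 0 T))
    (hXeq : ∀ t ∈ Set.Icc (0 : ℝ) T,
      X t = x₀ + W t + b * t + μ * (∫ s in (0 : ℝ)..t, max (-(X s)) 0) + e t)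
    (hξeq : ∀ t ∈ Set.Icc (0 : ℝ) T,
      ξ t = ξ₀ + V t + β * t + μ * ∫ s in (0 : ℝ)..t, max (-(ξ s)) 0) :
    (⨆ t : Set.Icc (0 : ℝ) T, |X t - ξ t|) ≤
      (|x₀ - ξ₀| + |b - β| * T + (⨆ t : Set.Icc (0 : ℝ) T, |W t - V t|) +
          ⨆ t : Set.Icc (0 : ℝ) T, |e t|) * Real.exp (μ * T) := by
  have hT0 : (0:ℝ) ≤ T := hT.le
  haveI : Nonempty (Set.Icc (0:ℝ) T) := ⟨⟨0, le_refl 0, hT0⟩⟩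
  -- clamp function
  set c : ℝ → ℝ := fun s => max 0 (min s T) with hc_def
  have hc_cont : Continuous c := continuous_const.max (continuous_id.min continuous_const)
  have hc_mem : ∀ s, c s ∈ Set.Icc (0:ℝ) T := fun s =>
    ⟨le_max_left _ _, max_le hT0 (min_le_right _ _)⟩
  have hc_eq : ∀ s ∈ Set.Icc (0:ℝ) T, c s = s := fun s hs => by
    simp [hc_def, min_eq_left hs.2, max_eq_right hs.1]
  set φ : ℝ → ℝ := fun s => |X (c s) - ξ (c s)| with hφ_def
  have hφ_cont : Continuous φ := by
    have h1 : Continuous fun s => X (c s) := hX.comp_continuous hc_cont hc_mem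
    have h2 : Continuous fun s => ξ (c s) := hξ.comp_continuous hc_cont hc_mem
    exact (h1.sub h2).abs
  have hφ_nonneg : ∀ s, 0 ≤ φ s := fun s => abs_nonneg _
  have hφ_eq : ∀ s ∈ Set.Icc (0:ℝ) T, φ s = |X s - ξ s| := fun s hs => by
    simp only [hφ_def, hc_eq s hs]
  set F : ℝ → ℝ := fun t => ∫ s in (0:ℝ)..t, φ s with hF_def
  have hF_deriv : ∀ t : ℝ, HasDerivAt F (φ t) t := fun t =>
    integral_hasDerivAt_right (hφ_cont.intervalIntegrable 0 t)
      hφ_cont.aestronglyMeasurable.stronglyMeasurableAtFilter hφ_cont.continuousAt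
  have hF_nonneg : ∀ t ∈ Set.Icc (0:ℝ) T, 0 ≤ F t := fun t ht =>
    intervalIntegral.integral_nonneg ht.1 fun s _ => hφ_nonneg s
  -- bddAbove facts
  have hbdd : ∀ g : ℝ → ℝ, ContinuousOn g (Set.Icc 0 T) →
      BddAbove (Set.range fun t : Set.Icc (0:ℝ) T => |g t|) := by
    intro g hg
    obtain ⟨M, hM⟩ := (isCompact_Icc.image_of_continuousOn hg.abs).bddAbove
    refine ⟨M, ?_⟩
    rintro y ⟨t, rfl⟩
    exact hM (Set.mem_image_of_mem _ t.2)
  have hbWV := hbdd (fun t => W t - V t) (hW.sub hV)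
  have hbe := hbdd e he
  set S₁ : ℝ := ⨆ t : Set.Icc (0:ℝ) T, |W t - V t| with hS₁
  set S₂ : ℝ := ⨆ t : Set.Icc (0:ℝ) T, |e t| with hS₂
  have hWVle : ∀ t ∈ Set.Icc (0:ℝ) T, |W t - V t| ≤ S₁ := fun t ht =>
    le_ciSup hbWV (⟨t, ht⟩ : Set.Icc (0:ℝ) T)
  have hele : ∀ t ∈ Set.Icc (0:ℝ) T, |e t| ≤ S₂ := fun t ht =>
    le_ciSup hbe (⟨t, ht⟩ : Set.Icc (0:ℝ) T)
  set C : ℝ := |x₀ - ξ₀| + |b - β| * T + S₁ + S₂ with hC_def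
  have hS₁0 : 0 ≤ S₁ := le_trans (abs_nonneg _) (hWVle 0 ⟨le_refl 0, hT0⟩)
  have hS₂0 : 0 ≤ S₂ := le_trans (abs_nonneg _) (hele 0 ⟨le_refl 0, hT0⟩)
  have hC0 : 0 ≤ C := by
    have := abs_nonneg (x₀ - ξ₀)
    have := mul_nonneg (abs_nonneg (b - β)) hT0
    simp only [hC_def]; linarith
  -- key integral inequality
  have key2 : ∀ t ∈ Set.Icc (0:ℝ) T, |X t - ξ t| ≤ C + μ * F t := by
    intro t ht
    have ht0 := ht.1
    have hsub : Set.Icc (0:ℝ) t ⊆ Set.Icc (0:ℝ) T := fun s hs => ⟨hs.1, hs.2.trans ht.2⟩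
    have iX : IntervalIntegrable (fun s => max (-(X s)) 0) volume 0 t :=
      (((hX.mono hsub).neg.sup continuousOn_const)).intervalIntegrable_of_Icc ht0
    have iξ : IntervalIntegrable (fun s => max (-(ξ s)) 0) volume 0 t :=
      (((hξ.mono hsub).neg.sup continuousOn_const)).intervalIntegrable_of_Icc ht0
    set I : ℝ := ∫ s in (0:ℝ)..t, (max (-(X s)) 0 - max (-(ξ s)) 0) with hI_def
    have heq : X t - ξ t = (x₀ - ξ₀) + (W t - V t) + (b - β) * t + μ * I + e t := by
      rw [hI_def, intervalIntegral.integral_sub iX iξ, hXeq t ht, hξeq t ht]; ring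
    have habs : |I| ≤ F t := by
      calc |I| ≤ ∫ s in (0:ℝ)..t, |max (-(X s)) 0 - max (-(ξ s)) 0| :=
            intervalIntegral.abs_integral_le_integral_abs ht0
        _ ≤ ∫ s in (0:ℝ)..t, φ s := by
            refine intervalIntegral.integral_mono_on ht0 (iX.sub iξ).abs
              (hφ_cont.intervalIntegrable 0 t) (fun s hs => ?_)
            rw [hφ_eq s (hsub hs)]
            calc |max (-(X s)) 0 - max (-(ξ s)) 0| ≤ |(-(X s)) - (-(ξ s))| :=
                  abs_max_sub_max_le_abs _ _ _
              _ = |X s - ξ s| := by rw [neg_sub_neg, abs_sub_comm]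
        _ = F t := rfl
    have h1 : |X t - ξ t| ≤ |x₀ - ξ₀| + |W t - V t| + |(b - β) * t| + |μ * I| + |e t| := by
      rw [heq]
      exact (abs_add_le _ _).trans (add_le_add_left ((abs_add_le _ _).trans
        (add_le_add_left ((abs_add_le _ _).trans
        (add_le_add_left (abs_add_le _ _) _)) _)) _)
    have h2 : |(b - β) * t| ≤ |b - β| * T := by
      rw [abs_mul, abs_of_nonneg ht0]
      exact mul_le_mul_of_nonneg_left ht.2 (abs_nonneg _)
    have h3 : |μ * I| ≤ μ * F t := by
      rw [abs_mul, abs_of_nonneg hμ]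
      exact mul_le_mul_of_nonneg_left habs hμ
    have h4 := hWVle t ht
    have h5 := hele t ht
    simp only [hC_def]; linarith
  -- Gronwall
  have hgron : ∀ t ∈ Set.Icc (0:ℝ) T, F t ≤ gronwallBound 0 μ C t := by
    intro t ht
    have := norm_le_gronwallBound_of_norm_deriv_right_le (f := F) (f' := φ)
      (δ := 0) (K := μ) (ε := C) (a := 0) (b := T)
      (fun s _ => (hF_deriv s).continuousAt.continuousWithinAt)
      (fun s _ => (hF_deriv s).hasDerivWithinAt)
      (by simp [hF_def])
      (fun s hs => by
        have hsIcc : s ∈ Set.Icc (0:ℝ) T := Set.Ico_subset_Icc_self hs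
        rw [Real.norm_eq_abs, Real.norm_eq_abs, abs_of_nonneg (hφ_nonneg s),
          abs_of_nonneg (hF_nonneg s hsIcc)]
        have := key2 s hsIcc
        rw [← hφ_eq s hsIcc] at this
        linarith)
      t ht
    rw [Real.norm_eq_abs, abs_of_nonneg (hF_nonneg t ht), sub_zero] at this
    exact this
  have hfinal : ∀ t ∈ Set.Icc (0:ℝ) T, C + μ * gronwallBound 0 μ C t ≤ C * Real.exp (μ * T) := by
    intro t ht
    rcases eq_or_lt_of_le hμ with hμ0 | hμpos
    · rw [← hμ0]
      simp only [gronwallBound_K0, zero_mul, zero_add]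
      simp [Real.exp_zero]
    · rw [gronwallBound_of_K_ne_0 hμpos.ne']
      have hfield : C + μ * (0 * Real.exp (μ * t) + C / μ * (Real.exp (μ * t) - 1))
          = C * Real.exp (μ * t) := by field_simp; ring
      rw [hfield]
      exact mul_le_mul_of_nonneg_left (Real.exp_le_exp.2
        (mul_le_mul_of_nonneg_left ht.2 hμ)) hC0
  refine ciSup_le fun t => ?_
  calc |X t.1 - ξ t.1| ≤ C + μ * F t.1 := key2 t.1 t.2
    _ ≤ C + μ * gronwallBound 0 μ C t.1 := by
        have := hgron t.1 t.2
        nlinarith [hgron t.1 t.2]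
    _ ≤ C * Real.exp (μ * T) := hfinal t.1 t.2
end

section
/- Let T > 0 and 0 ≤ μ ≤ μ̄. Let X, W, e : [0, T] → ℝ be continuous functions and x₀, b ∈ ℝ such that X(t) = x₀ + W(t) + b·t + μ·∫₀ᵗ X(s)⁻ ds + e(t) and |e(t)| ≤ μ̄·∫₀ᵗ |X(s)| ds for every t ∈ [0, T]. Then sup_{t ∈ [0,T]} |X(t)| ≤ ( |x₀| + sup_{t ∈ [0,T]} |W(t)| + |b|·T ) · exp(2μ̄T). -/
open MeasureTheory intervalIntegral

theorem stmt_15 (T μ μbar : ℝ) (hT : 0 < T) (hμ0 : 0 ≤ μ) (hμ : μ ≤ μbar)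
    (X W e : ℝ → ℝ) (x₀ b : ℝ)
    (hX : ContinuousOn X (Set.Icc 0 T)) (hW : ContinuousOn W (Set.Icc 0 T))
    (he : ContinuousOn e (Set.Icc 0 T))
    (hXeq : ∀ t ∈ Set.Icc (0 : ℝ) T,
      X t = x₀ + W t + b * t + μ * (∫ s in (0 : ℝ)..t, max (-(X s)) 0) + e t)
    (hebound : ∀ t ∈ Set.Icc (0 : ℝ) T, |e t| ≤ μbar * ∫ s in (0 : ℝ)..t, |X s|) :
    (⨆ t : Set.Icc (0 : ℝ) T, |X t|) ≤
      (|x₀| + (⨆ t : Set.Icc (0 : ℝ) T, |W t|) + |b| * T) * Real.exp (2 * μbar * T) := by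
  have hμb : 0 ≤ μbar := le_trans hμ0 hμ
  set Y : ℝ → ℝ := fun s => X (Set.projIcc 0 T hT.le s) with hY
  have hYcont : Continuous Y :=
    hX.comp_continuous (continuous_subtype_val.comp continuous_projIcc) (fun x => Subtype.coe_prop _)
  have hYeq : ∀ s ∈ Set.Icc (0 : ℝ) T, Y s = X s := fun s hs => by
    simp [hY, Set.projIcc_of_mem hT.le hs]
  set g : ℝ → ℝ := fun t => ∫ s in (0:ℝ)..t, |Y s| with hg
  have hint : ∀ a b : ℝ, IntervalIntegrable (fun s => |Y s|) volume a b :=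
    fun a b => (hYcont.abs.intervalIntegrable a b)
  have hg' : ∀ t : ℝ, HasDerivAt g (|Y t|) t := fun t =>
    integral_hasDerivAt_right (hint 0 t)
      (hYcont.abs.stronglyMeasurableAtFilter _ _)
      (hYcont.abs.continuousAt)
  have hgeqX : ∀ t ∈ Set.Icc (0:ℝ) T, g t = ∫ s in (0:ℝ)..t, |X s| := by
    intro t ht
    apply intervalIntegral.integral_congr
    intro s hs
    rw [Set.uIcc_of_le ht.1] at hs
    exact congrArg abs (hYeq s ⟨hs.1, hs.2.trans ht.2⟩)
  -- nonneg of g on [0,T]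
  have hgnn : ∀ t ∈ Set.Icc (0:ℝ) T, 0 ≤ g t := fun t ht =>
    intervalIntegral.integral_nonneg ht.1 (fun s _ => abs_nonneg _)
  -- sup of |W| bdd above
  have hne : (Set.Icc (0:ℝ) T).Nonempty := Set.nonempty_Icc.2 hT.le
  haveI : Nonempty (Set.Icc (0:ℝ) T) := hne.to_subtype
  have hbddW : BddAbove (Set.range fun t : Set.Icc (0:ℝ) T => |W t|) := by
    have := (isCompact_Icc (a := (0:ℝ)) (b := T)).bddAbove_image (hW.abs)
    rw [Set.image_eq_range] at this
    exact this
  set SW := (⨆ t : Set.Icc (0:ℝ) T, |W t|) with hSW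
  set K₀ := |x₀| + SW + |b| * T with hK₀
  have hSWnn : 0 ≤ SW := le_trans (abs_nonneg (W 0))
    (le_ciSup hbddW ⟨0, Set.left_mem_Icc.2 hT.le⟩)
  have hK₀nn : 0 ≤ K₀ := by positivity
  -- main pointwise bound
  have key : ∀ t ∈ Set.Icc (0:ℝ) T, |X t| ≤ K₀ + 2 * μbar * g t := by
    intro t ht
    have h1 : |W t| ≤ SW := le_ciSup hbddW ⟨t, ht⟩
    have h2 : |b * t| ≤ |b| * T := by
      rw [abs_mul]
      exact mul_le_mul_of_nonneg_left (by rw [abs_of_nonneg ht.1]; exact ht.2) (abs_nonneg b)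
    have h3 : μ * |∫ s in (0:ℝ)..t, max (-(X s)) 0| ≤ μbar * g t := by
      rw [hgeqX t ht]
      have hXint : IntervalIntegrable (fun s => |X s|) volume 0 t :=
        ContinuousOn.intervalIntegrable (by
          rw [Set.uIcc_of_le ht.1]
          exact (hX.mono (Set.Icc_subset_Icc_right ht.2)).abs)
      have hXint2 : IntervalIntegrable (fun s => max (-(X s)) 0) volume 0 t :=
        ContinuousOn.intervalIntegrable (by
          rw [Set.uIcc_of_le ht.1]
          exact (continuous_id.neg.max continuous_const).comp_continuousOn (hX.mono (Set.Icc_subset_Icc_right ht.2)))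
      have habs : |∫ s in (0:ℝ)..t, max (-(X s)) 0| ≤ ∫ s in (0:ℝ)..t, |X s| := by
        calc |∫ s in (0:ℝ)..t, max (-(X s)) 0|
            ≤ ∫ s in (0:ℝ)..t, |max (-(X s)) 0| := by
              apply intervalIntegral.abs_integral_le_integral_abs ht.1
          _ ≤ ∫ s in (0:ℝ)..t, |X s| := by
              apply intervalIntegral.integral_mono_on ht.1 hXint2.abs hXint
              intro s _
              rw [abs_of_nonneg (le_max_right _ _)]
              exact max_le (neg_le_abs _) (abs_nonneg _)
      exact mul_le_mul hμ habs (abs_nonneg _) hμb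
    have h4 : |e t| ≤ μbar * g t := by rw [hgeqX t ht]; exact hebound t ht
    calc |X t| = |x₀ + W t + b * t + μ * (∫ s in (0:ℝ)..t, max (-(X s)) 0) + e t| := by
          rw [hXeq t ht]
      _ ≤ |x₀| + |W t| + |b * t| + μ * |∫ s in (0:ℝ)..t, max (-(X s)) 0| + |e t| := by
          calc _ ≤ |x₀ + W t + b * t + μ * (∫ s in (0:ℝ)..t, max (-(X s)) 0)| + |e t| :=
                abs_add_le _ _
            _ ≤ |x₀ + W t + b * t| + |μ * (∫ s in (0:ℝ)..t, max (-(X s)) 0)| + |e t| := by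
                gcongr; exact abs_add_le _ _
            _ ≤ _ := by
                rw [abs_mul, abs_of_nonneg hμ0]
                gcongr
                calc _ ≤ |x₀ + W t| + |b * t| := abs_add_le _ _
                  _ ≤ _ := by gcongr; exact abs_add_le _ _
      _ ≤ K₀ + 2 * μbar * g t := by
          rw [hK₀]
          have := h3; have := h4
          nlinarith [hgnn t ht]
  -- Gronwall on g
  have hgron : ∀ t ∈ Set.Icc (0:ℝ) T, g t ≤ gronwallBound 0 (2 * μbar) K₀ t := by
    intro t ht
    have := norm_le_gronwallBound_of_norm_deriv_right_le (f := g) (f' := fun x => |Y x|)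
      (δ := 0) (K := 2 * μbar) (ε := K₀) (a := 0) (b := T)
      (fun x _ => (hg' x).continuousAt.continuousWithinAt)
      (fun x _ => (hg' x).hasDerivWithinAt)
      (by simp [hg])
      (fun x hx => by
        rw [Real.norm_eq_abs, Real.norm_eq_abs, abs_abs,
          abs_of_nonneg (hgnn x ⟨hx.1, hx.2.le⟩), hYeq x ⟨hx.1, hx.2.le⟩]
        linarith [key x ⟨hx.1, hx.2.le⟩]) t ht
    rw [Real.norm_eq_abs, abs_of_nonneg (hgnn t ht), sub_zero] at this
    exact this
  -- conclude
  apply ciSup_le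
  rintro ⟨t, ht⟩
  have h1 : |X t| ≤ K₀ + 2 * μbar * gronwallBound 0 (2 * μbar) K₀ t := by
    exact (key t ht).trans (by nlinarith [hgron t ht, hμb])
  have h2 : K₀ + 2 * μbar * gronwallBound 0 (2 * μbar) K₀ t ≤ K₀ * Real.exp (2 * μbar * T) := by
    rcases eq_or_lt_of_le hμb with h | h
    · rw [← h]
      simp [gronwallBound_K0]
    · have hK : (2 * μbar) ≠ 0 := by positivity
      rw [gronwallBound_of_K_ne_0 hK]
      have hexp : Real.exp (2 * μbar * t) ≤ Real.exp (2 * μbar * T) := by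
        apply Real.exp_le_exp.2; nlinarith [ht.2, hμb]
      have : K₀ + 2 * μbar * (0 * Real.exp (2 * μbar * t)
          + K₀ / (2 * μbar) * (Real.exp (2 * μbar * t) - 1))
          = K₀ * Real.exp (2 * μbar * t) := by
        field_simp
        ring
      rw [this]
      exact mul_le_mul_of_nonneg_left hexp hK₀nn
  exact h1.trans h2
end
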